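/- arXiv:1703.04346 — 10 statements merged into one kernel-verified Lean document; each statement's English description precedes it below -/
import Mathlib

section
/- Let q be a prime power and let C be an [n,k] linear code over F_{q²} with generator matrix G (a k×n matrix over F_{q²} of rank k whose rows span C). Then C is a Hermitian LCD code if and only if the k×k matrix G·(conj G)ᵀ is nonsingular, where conj G is obtained from G by raising every entry to the q-th power. -/
open Matrix

/-- The Hermitian dual of a linear code `C ⊆ F^ι` over `F = F_{q²}`, where the
conjugate of `x` is `x ^ q`: all words `b` with `∑ i, b i * (c i)^q = 0` for
every codeword `c ∈ C`. -/
def hdualCode {F : Type*} [Field F] (q : ℕ) {ι : Type*} [Fintype ι]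
    (C : Submodule F (ι → F)) : Submodule F (ι → F) where
  carrier := {b | ∀ c ∈ C, b ⬝ᵥ (fun i => (c i) ^ q) = 0}
  add_mem' := by
    intro a b ha hb c hc
    simp [add_dotProduct, ha c hc, hb c hc]
  zero_mem' := by
    intro c hc
    simp
  smul_mem' := by
    intro r a ha c hc
    simp [smul_dotProduct, ha c hc]

/-- A linear code over the finite field `F_{q²}` (`q` a prime power) with a
generator matrix `G` (rows linearly independent and spanning `C`) is Hermitian
LCD iff `G * (conj G)ᵀ` is nonsingular, where `conj G` raises every entry of
`G` to the `q`-th power. -/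
theorem hermitian_lcd_iff_gram_nonsingular
    (q : ℕ) (hq : ∃ p m : ℕ, p.Prime ∧ 0 < m ∧ q = p ^ m)
    {F : Type*} [Field F] [Fintype F] (hcard : Fintype.card F = q ^ 2)
    {n k : ℕ} (C : Submodule F (Fin n → F)) (hdim : Module.finrank F C = k)
    (G : Matrix (Fin k) (Fin n) F)
    (hindep : LinearIndependent F G)
    (hspan : Submodule.span F (Set.range G) = C) :
    C ⊓ hdualCode q C = ⊥ ↔ (G * (G.map (· ^ q))ᵀ).det ≠ 0 := by
  classical
  obtain ⟨p, m, hp, hm, hqpm⟩ := hq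
  -- char F = p
  set p' := ringChar F with hp'
  haveI : CharP F p' := ringChar.charP F
  have hp'prime : p'.Prime := CharP.char_is_prime F p'
  obtain ⟨d, _, hcard'⟩ := FiniteField.card F p'
  have hpp' : p' = p := by
    have hdvd : p' ∣ p ^ (m * 2) := by
      have : p' ∣ p' ^ (d : ℕ) := dvd_pow_self _ d.ne_zero
      rw [← hcard', hcard, hqpm, ← pow_mul] at this
      exact this
    exact (Nat.prime_dvd_prime_iff_eq hp'prime hp).mp
      (hp'prime.dvd_of_dvd_pow hdvd)
  haveI : CharP F p := hpp' ▸ ‹CharP F p'›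
  haveI : ExpChar F p := ExpChar.prime hp
  have hfrob : ∀ x y : F, (x + y) ^ q = x ^ q + y ^ q := by
    intro x y
    rw [hqpm]
    exact add_pow_expChar_pow x y p m
  -- key computation
  have key : ∀ (v : Fin k → F) (j : Fin k),
      (v ᵥ* G) ⬝ᵥ (fun i => (G j i) ^ q) = (v ᵥ* (G * (G.map (· ^ q))ᵀ)) j := by
    intro v j
    simp only [Matrix.vecMul, dotProduct, Matrix.mul_apply,
      Matrix.transpose_apply, Matrix.map_apply, Finset.sum_mul, Finset.mul_sum]
    simp only [mul_assoc]
    rw [Finset.sum_comm]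
  have vsum : ∀ v : Fin k → F, v ᵥ* G = ∑ i, v i • G i := by
    intro v
    funext j
    simp [Matrix.vecMul, dotProduct, Finset.sum_apply]
  have memC : ∀ v : Fin k → F, (v ᵥ* G) ∈ C := by
    intro v
    rw [← hspan, vsum]
    exact Submodule.sum_mem _ fun i _ => Submodule.smul_mem _ _
      (Submodule.subset_span ⟨i, rfl⟩)
  constructor
  · -- LCD → det ≠ 0
    intro hLCD hdet
    obtain ⟨v, hv0, hvM⟩ := Matrix.exists_vecMul_eq_zero_iff.mpr hdet
    have hxC : (v ᵥ* G) ∈ C := memC v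
    have hxD : (v ᵥ* G) ∈ hdualCode q C := by
      intro c hc
      rw [← hspan] at hc
      induction hc using Submodule.span_induction with
      | mem c hcmem =>
        obtain ⟨j, rfl⟩ := hcmem
        rw [key v j, hvM]
        rfl
      | zero =>
        have : (fun i => ((0 : Fin n → F) i) ^ q) = 0 := by
          funext i
          simp [zero_pow (hqpm ▸ pow_ne_zero m hp.ne_zero)]
        rw [this, dotProduct_zero]
      | add c c' _ _ hc hc' =>
        have : (fun i => ((c + c') i) ^ q) =
            (fun i => (c i) ^ q) + fun i => (c' i) ^ q := by
          funext i; exact hfrob (c i) (c' i)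
        rw [this, dotProduct_add, hc, hc', add_zero]
      | smul r c _ hc =>
        have : (fun i => ((r • c) i) ^ q) = r ^ q • fun i => (c i) ^ q := by
          funext i; simp [mul_pow]
        rw [this, dotProduct_smul, hc, smul_zero]
    have : (v ᵥ* G) = 0 := by
      have := hLCD ▸ Submodule.mem_inf.mpr ⟨hxC, hxD⟩
      simpa using this
    rw [vsum] at this
    exact hv0 (funext fun i => Fintype.linearIndependent_iff.mp hindep v this i)
  · -- det ≠ 0 → LCD
    intro hdet
    rw [eq_bot_iff]
    intro x hx
    obtain ⟨hxC, hxD⟩ := Submodule.mem_inf.mp hx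
    rw [← hspan] at hxC
    obtain ⟨v, rfl⟩ := Submodule.mem_span_range_iff_exists_fun F |>.mp hxC
    have hsum : (∑ i, v i • G i) = v ᵥ* G := (vsum v).symm
    rw [hsum] at hxD ⊢
    have hvM : v ᵥ* (G * (G.map (· ^ q))ᵀ) = 0 := by
      funext j
      rw [← key v j]
      exact hxD (G j) (hspan ▸ Submodule.subset_span ⟨j, rfl⟩)
    have hv0 : v = 0 := by
      by_contra hv
      exact hdet (Matrix.exists_vecMul_eq_zero_iff.mp ⟨v, hv, hvM⟩)
    simp [hv0, Submodule.zero_mem]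
end

section
/- Let q be a prime power and let C be an [n,k,d] linear code over F_q with generator matrix G = [I_k : P] in standard form. Let M = G·Gᵀ. Let t ≤ k−1 be a non-negative integer such that det(M_I) = 0 for every subset I of {1,…,k} with 0 ≤ |I| ≤ t, and suppose there exists J ⊆ {1,…,k} of size t+1 with det(M_J) ≠ 0. Then t ≥ h_E(C) − 1, where h_E(C) is the dimension of the Euclidean hull of C. -/
open Matrix

/-- The Euclidean dual of a linear code. -/
def dualCode {F : Type*} [Field F] {ι : Type*} [Fintype ι]
    (C : Submodule F (ι → F)) : Submodule F (ι → F) where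
  carrier := {b | ∀ c ∈ C, b ⬝ᵥ c = 0}
  add_mem' := by
    intro a b ha hb c hc
    simp [add_dotProduct, ha c hc, hb c hc]
  zero_mem' := by
    intro c hc
    simp
  smul_mem' := by
    intro r a ha c hc
    simp [smul_dotProduct, ha c hc]

/-- The minimum (Hamming) distance of a linear code. -/
noncomputable def minDist {F : Type*} [Field F] [DecidableEq F] {ι : Type*} [Fintype ι]
    (C : Submodule F (ι → F)) : ℕ :=
  sInf {w | ∃ c ∈ C, c ≠ 0 ∧ hammingNorm c = w}

/-- The square submatrix of `M` obtained by deleting the rows and columns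
indexed by `I`. -/
def deleteRC {F : Type*} [Field F] {l : ℕ} (M : Matrix (Fin l) (Fin l) F)
    (I : Finset (Fin l)) : Matrix {i : Fin l // i ∉ I} {i : Fin l // i ∉ I} F :=
  Matrix.of fun i j => M i.1 j.1

/-- Let `C` be an `[n,k,d]` linear code over `F_q` with generator matrix
`G = [I_k : P]` in standard form and `M = G * Gᵀ`.  Suppose `det (M_I) = 0` for
every `I` with `|I| ≤ t ≤ k - 1`, and `det (M_J) ≠ 0` for some `J` of size
`t + 1`.  Then `t ≥ h_E(C) - 1`, i.e. `h_E(C) ≤ t + 1`, where `h_E(C)` is the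
dimension of the Euclidean hull `C ⊓ C^⊥`. -/
theorem hull_dim_le_of_principal_minor_nonzero
    (q : ℕ) (hq : ∃ p m : ℕ, p.Prime ∧ 0 < m ∧ q = p ^ m)
    {F : Type*} [Field F] [Fintype F] [DecidableEq F] (hcard : Fintype.card F = q)
    {n k d : ℕ} (hkn : k ≤ n)
    (C : Submodule F (Fin n → F))
    (hdim : Module.finrank F C = k) (hd : minDist C = d)
    (G : Matrix (Fin k) (Fin n) F)
    (hstd : ∀ i j : Fin k, G i (Fin.castLE hkn j) = if i = j then 1 else 0)
    (hspan : Submodule.span F (Set.range G) = C)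
    (t : ℕ) (ht : t + 1 ≤ k)
    (h0 : ∀ I : Finset (Fin k), I.card ≤ t → (deleteRC (G * Gᵀ) I).det = 0)
    (J : Finset (Fin k)) (hJcard : J.card = t + 1)
    (hJ : (deleteRC (G * Gᵀ) J).det ≠ 0) :
    Module.finrank F ↥(C ⊓ dualCode C) ≤ t + 1 := by
  classical
  set M := G * Gᵀ with hM
  have hinj : Function.Injective G.vecMulLinear := by
    rw [← LinearMap.ker_eq_bot, LinearMap.ker_eq_bot']
    intro x hx
    funext j
    have := congr_fun hx (Fin.castLE hkn j)
    simpa [vecMul, dotProduct, hstd, Finset.sum_ite_eq'] using this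
  have hC : LinearMap.range G.vecMulLinear = C := by
    rw [range_vecMulLinear]; exact hspan
  have hdual : ∀ c, c ∈ dualCode C ↔ G *ᵥ c = 0 := by
    intro c
    constructor
    · intro h
      funext i
      have hGi : G i ∈ C := by
        rw [← hspan]; exact Submodule.subset_span ⟨i, rfl⟩
      simpa [mulVec, dotProduct, mul_comm] using h (G i) hGi
    · intro h b hb
      rw [← hC] at hb
      obtain ⟨x, rfl⟩ := hb
      have hxG : G.vecMulLinear x = Gᵀ *ᵥ x := Matrix.vecMul_transpose Gᵀ x
      rw [hxG, Matrix.dotProduct_mulVec, Matrix.vecMul_transpose, h]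
      simp
  have key : ∀ x : Fin k → F, (G.vecMulLinear x ∈ dualCode C ↔ M.mulVecLin x = 0) := by
    intro x
    have h2 : G.vecMulLinear x = Gᵀ *ᵥ x := Matrix.vecMul_transpose Gᵀ x
    rw [hdual, h2, Matrix.mulVec_mulVec, mulVecLin_apply, ← hM]
  have hhull : C ⊓ dualCode C = Submodule.map G.vecMulLinear (LinearMap.ker M.mulVecLin) := by
    ext c
    simp only [Submodule.mem_inf, Submodule.mem_map, LinearMap.mem_ker]
    constructor
    · intro ⟨hc1, hc2⟩
      rw [← hC] at hc1
      obtain ⟨x, rfl⟩ := hc1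
      exact ⟨x, (key x).1 hc2, rfl⟩
    · rintro ⟨x, hx, rfl⟩
      exact ⟨by rw [← hC]; exact ⟨x, rfl⟩, (key x).2 hx⟩
  -- restriction to J is injective on the kernel of M
  have hker : Module.finrank F ↥(LinearMap.ker M.mulVecLin) ≤ t + 1 := by
    let L : ↥(LinearMap.ker M.mulVecLin) →ₗ[F] ({j : Fin k // j ∈ J} → F) :=
      (LinearMap.funLeft F F Subtype.val).comp (LinearMap.ker M.mulVecLin).subtype
    have hLinj : Function.Injective L := by
      rw [← LinearMap.ker_eq_bot, LinearMap.ker_eq_bot']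
      intro x hx
      have hxJ : ∀ j ∈ J, (x : Fin k → F) j = 0 := by
        intro j hj
        exact congr_fun hx ⟨j, hj⟩
      have hxker : M *ᵥ (x : Fin k → F) = 0 := x.2
      have hNx : (deleteRC M J) *ᵥ (fun i : {i : Fin k // i ∉ J} => (x : Fin k → F) i.1)
          = 0 := by
        funext i
        simp only [Pi.zero_apply]
        have h1 : ∑ j : Fin k, M i.1 j * (x : Fin k → F) j = 0 := by
          simpa [Matrix.mulVec, dotProduct] using congr_fun hxker i.1
        have h2 : ∑ j ∈ Jᶜ, M i.1 j * (x : Fin k → F) j = 0 := by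
          rw [Finset.sum_subset (Finset.subset_univ Jᶜ) (fun j _ hj => by
            rw [hxJ j (by simpa using hj), mul_zero])]
          exact h1
        calc (deleteRC M J *ᵥ fun i : {i : Fin k // i ∉ J} => (x : Fin k → F) i.1) i
            = ∑ j : {i : Fin k // i ∉ J}, M i.1 j.1 * (x : Fin k → F) j.1 := by
              simp [deleteRC, Matrix.mulVec, dotProduct]
          _ = ∑ j ∈ Jᶜ, M i.1 j * (x : Fin k → F) j :=
              (Finset.sum_subtype Jᶜ (fun j => Finset.mem_compl)
                (fun j => M i.1 j * (x : Fin k → F) j)).symm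
          _ = 0 := h2
      have hx0 : (fun i : {i : Fin k // i ∉ J} => (x : Fin k → F) i.1) = 0 :=
        Matrix.eq_zero_of_mulVec_eq_zero hJ hNx
      have hx1 : (x : Fin k → F) = 0 := by
        funext i
        by_cases hi : i ∈ J
        · exact hxJ i hi
        · exact congr_fun hx0 ⟨i, hi⟩
      exact Subtype.ext hx1
    have hcodim : Module.finrank F ({j : Fin k // j ∈ J} → F) = t + 1 := by
      simp only [Module.finrank_pi]
      rw [Fintype.card_coe, hJcard]
    calc Module.finrank F ↥(LinearMap.ker M.mulVecLin)
        ≤ Module.finrank F ({j : Fin k // j ∈ J} → F) :=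
          LinearMap.finrank_le_finrank_of_injective hLinj
      _ = t + 1 := hcodim
  calc Module.finrank F ↥(C ⊓ dualCode C)
      = Module.finrank F ↥(LinearMap.ker M.mulVecLin) := by
        rw [hhull]
        exact (LinearEquiv.finrank_eq
          (Submodule.equivMapOfInjective G.vecMulLinear hinj _)).symm
    _ ≤ t + 1 := hker
end

section
/- Let q be a prime power with q > 3 and let C be an [n,k,d] linear code over F_q. Then there exists a = (a_1,…,a_n) ∈ F_q^n with a_j ≠ 0 for every 1 ≤ j ≤ n such that the code C_a is an Euclidean LCD code (hence C is equivalent to an Euclidean LCD code). -/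
open Matrix

/-- The linear map `(c_1, …, c_n) ↦ (a_1 c_1, …, a_n c_n)`; its image of a code
`C` is the code `C_a`. -/
def scaleMap {F : Type*} [Field F] {n : ℕ} (a : Fin n → F) :
    (Fin n → F) →ₗ[F] (Fin n → F) :=
  LinearMap.pi fun i => a i • LinearMap.proj i

section AuxLCD

variable {F : Type*} [Field F]

lemma affine_pick {T : Finset F} (hT : 2 ≤ T.card) (α β t0 : F) (h : α + t0 * β ≠ 0) :
    ∃ t ∈ T, α + t * β ≠ 0 := by
  by_contra h'
  push_neg at h'
  obtain ⟨t1, ht1, t2, ht2, hne⟩ := Finset.one_lt_card.mp hT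
  by_cases hβ : β = 0
  · subst hβ
    have := h' t1 ht1
    simp only [mul_zero, add_zero] at this h
    exact h (by simpa using this)
  · have e1 := h' t1 ht1
    have e2 := h' t2 ht2
    have : t1 * β = t2 * β := by linear_combination e1 - e2
    exact hne (mul_right_cancel₀ hβ this)

lemma multiaffine_grid {n : ℕ} (Φ : (Fin n → F) → F)
    (hΦ : ∀ (j : Fin n) (b : Fin n → F), ∃ α β : F, ∀ t, Φ (Function.update b j t) = α + t * β)
    (T : Finset F) (hT : 2 ≤ T.card) (b0 : Fin n → F) (h0 : Φ b0 ≠ 0) :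
    ∃ b, (∀ j, b j ∈ T) ∧ Φ b ≠ 0 := by
  classical
  suffices H : ∀ m (b0 : Fin n → F),
      (Finset.univ.filter fun j => b0 j ∉ T).card ≤ m → Φ b0 ≠ 0 →
      ∃ b, (∀ j, b j ∈ T) ∧ Φ b ≠ 0 from H _ b0 le_rfl h0
  intro m
  induction m with
  | zero =>
    intro b0 hc h0
    refine ⟨b0, fun j => ?_, h0⟩
    by_contra hj
    have : j ∈ Finset.univ.filter fun j => b0 j ∉ T := by simp [hj]
    have := Finset.card_pos.mpr ⟨j, this⟩
    omega
  | succ m ih =>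
    intro b0 hc h0
    by_cases hall : ∀ j, b0 j ∈ T
    · exact ⟨b0, hall, h0⟩
    · push_neg at hall
      obtain ⟨j, hj⟩ := hall
      obtain ⟨α, β, hab⟩ := hΦ j b0
      have hval : Φ b0 = α + b0 j * β := by
        rw [← hab (b0 j), Function.update_eq_self]
      obtain ⟨t, ht, hne⟩ := affine_pick hT α β (b0 j) (hval ▸ h0)
      refine ih (Function.update b0 j t) ?_ (by rw [hab]; exact hne)
      have hsub : (Finset.univ.filter fun i => Function.update b0 j t i ∉ T) ⊆
          (Finset.univ.filter fun i => b0 i ∉ T).erase j := by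
        intro i hi
        simp only [Finset.mem_filter, Finset.mem_univ, true_and] at hi
        have hij : i ≠ j := by
          rintro rfl
          rw [Function.update_self] at hi
          exact hi ht
        rw [Function.update_of_ne hij] at hi
        exact Finset.mem_erase.mpr ⟨hij, by simp [hi]⟩
      have hjmem : j ∈ Finset.univ.filter fun i => b0 i ∉ T := by simp [hj]
      have := Finset.card_le_card hsub
      rw [Finset.card_erase_of_mem hjmem] at this
      have := Finset.card_pos.mpr ⟨j, hjmem⟩
      omega

variable {F : Type*} [Field F] {k : ℕ}

/-- matrix with the rows in `S` modified by `t`-scaled rank-one update -/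
def NS (M : Matrix (Fin k) (Fin k) F) (u : Fin k → F) (S : Finset (Fin k)) (t : F) :
    Matrix (Fin k) (Fin k) F :=
  Matrix.of fun i => if i ∈ S then M i + (t * u i) • u else M i

lemma NS_empty (M : Matrix (Fin k) (Fin k) F) (u : Fin k → F) (t : F) :
    NS M u ∅ t = M := by
  ext i j; simp [NS]

lemma det_updateRow_NS_const (M : Matrix (Fin k) (Fin k) F) (u : Fin k → F) :
    ∀ (S : Finset (Fin k)) (t : F) (a : Fin k), a ∉ S →
      (Matrix.updateRow (NS M u S t) a u).det = (Matrix.updateRow M a u).det := by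
  classical
  intro S
  induction S using Finset.induction_on with
  | empty => intro t a _; rw [NS_empty]
  | @insert b S' hb ih =>
    intro t a ha
    have hab : a ≠ b := fun h => ha (h ▸ Finset.mem_insert_self b S')
    have haS : a ∉ S' := fun h => ha (Finset.mem_insert_of_mem h)
    have key : Matrix.updateRow (NS M u (insert b S') t) a u =
        Matrix.updateRow (Matrix.updateRow (NS M u S' t) a u) b
          ((Matrix.updateRow (NS M u S' t) a u) b + (t * u b) •
            ((Matrix.updateRow (NS M u S' t) a u) a)) := by
      ext i j
      by_cases hia : i = a <;> by_cases hib : i = b <;>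
        simp_all [NS, Matrix.updateRow_apply, Finset.mem_insert]
    rw [key, Matrix.det_updateRow_add_smul_self _ (Ne.symm hab), ih t a haS]

lemma det_NS_affine (M : Matrix (Fin k) (Fin k) F) (u : Fin k → F) :
    ∀ S : Finset (Fin k), ∃ α β : F, ∀ t, (NS M u S t).det = α + t * β := by
  classical
  intro S
  induction S using Finset.induction_on with
  | empty => exact ⟨M.det, 0, fun t => by rw [NS_empty]; ring⟩
  | @insert a S' ha ih =>
    obtain ⟨α, β, hab⟩ := ih
    refine ⟨α, β + u a * (Matrix.updateRow M a u).det, fun t => ?_⟩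
    have key : NS M u (insert a S') t =
        Matrix.updateRow (NS M u S' t) a (M a + (t * u a) • u) := by
      ext i j
      by_cases hia : i = a <;>
        simp_all [NS, Matrix.updateRow_apply, Finset.mem_insert]
    rw [key]
    have h1 : Matrix.updateRow (NS M u S' t) a (M a) = NS M u S' t := by
      have : M a = (NS M u S' t) a := by funext j; simp [NS, ha]
      rw [this, Matrix.updateRow_eq_self]
    rw [Matrix.det_updateRow_add, h1, Matrix.det_updateRow_smul,
      det_updateRow_NS_const M u S' t a ha, hab]
    ring

lemma det_rank_one_affine (M A : Matrix (Fin k) (Fin k) F) (u : Fin k → F)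
    (hA : ∀ i i', A i i' = u i * u i') :
    ∃ α β : F, ∀ t, (M + t • A).det = α + t * β := by
  classical
  obtain ⟨α, β, h⟩ := det_NS_affine M u Finset.univ
  refine ⟨α, β, fun t => ?_⟩
  rw [← h t]
  congr 1
  ext i j
  simp only [NS, Matrix.of_apply, Finset.mem_univ, if_true, Matrix.add_apply,
    Matrix.smul_apply, Pi.add_apply, Pi.smul_apply, smul_eq_mul, hA]
  ring

lemma phi_multiaffine (G : Matrix (Fin k) (Fin n) F) (j : Fin n) (b : Fin n → F) :
    ∃ α β : F, ∀ t, (G * diagonal (Function.update b j t) * Gᵀ).det = α + t * β := by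
  classical
  set u : Fin k → F := fun i => G i j with hu
  have hA : ∀ i i', (G * diagonal (Pi.single j (1:F)) * Gᵀ) i i' = u i * u i' := by
    intro i i'
    rw [Matrix.mul_apply]
    rw [Finset.sum_eq_single j]
    · simp [Matrix.mul_diagonal, hu]
    · intro l _ hl
      simp [Matrix.mul_diagonal, Pi.single_eq_of_ne hl]
    · simp
  have hsplit : ∀ t : F, G * diagonal (Function.update b j t) * Gᵀ
      = G * diagonal (Function.update b j 0) * Gᵀ
        + t • (G * diagonal (Pi.single j (1:F)) * Gᵀ) := by
    intro t
    have hdiag : diagonal (Function.update b j t)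
        = diagonal (Function.update b j 0) + t • diagonal (Pi.single j (1:F)) := by
      ext i i'
      by_cases h : i = i'
      · subst h
        by_cases h2 : i = j
        · subst h2; simp
        · simp [Matrix.diagonal_apply_eq, Function.update_of_ne h2, Pi.single_eq_of_ne h2]
      · simp [Matrix.diagonal_apply_ne _ h]
    rw [hdiag, Matrix.mul_add, Matrix.add_mul, Matrix.mul_smul, Matrix.smul_mul]
  obtain ⟨α, β, h⟩ := det_rank_one_affine (G * diagonal (Function.update b j 0) * Gᵀ) (G * diagonal (Pi.single j (1:F)) * Gᵀ) u hA
  exact ⟨α, β, fun t => by rw [hsplit t, h t]⟩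

variable {F : Type*} [Field F] [DecidableEq F]

lemma squares_card [Fintype F] (hq : 3 < Fintype.card F) :
    2 ≤ ((Finset.univ.erase (0:F)).image fun x => x * x).card := by
  by_contra h
  push_neg at h
  set T := ((Finset.univ.erase (0:F)).image fun x => x * x) with hT
  have h1 : (1:F) ∈ T := by
    refine Finset.mem_image.mpr ⟨1, ?_, mul_one 1⟩
    exact Finset.mem_erase.mpr ⟨one_ne_zero, Finset.mem_univ _⟩
  have hcard1 : T.card = 1 := le_antisymm (by omega) (Finset.card_pos.mpr ⟨1, h1⟩)
  obtain ⟨c, hc⟩ := Finset.card_eq_one.mp hcard1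
  have hall : ∀ x : F, x ≠ 0 → x * x = c := by
    intro x hx
    have : x * x ∈ T := Finset.mem_image.mpr ⟨x, Finset.mem_erase.mpr ⟨hx, Finset.mem_univ _⟩, rfl⟩
    rw [hc] at this
    exact Finset.mem_singleton.mp this
  set p : Polynomial F := Polynomial.X ^ 2 - Polynomial.C c with hp
  have hpm : p.Monic := Polynomial.monic_X_pow_sub_C c (by norm_num)
  have hpne : p ≠ 0 := hpm.ne_zero
  have hdeg : p.natDegree = 2 := Polynomial.natDegree_X_pow_sub_C
  have hsub : Finset.univ.erase (0:F) ⊆ p.roots.toFinset := by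
    intro x hx
    obtain ⟨hx0, -⟩ := Finset.mem_erase.mp hx
    rw [Multiset.mem_toFinset, Polynomial.mem_roots hpne]
    show p.IsRoot x
    simp [hp, pow_two, hall x hx0]
  have h2 : (Finset.univ.erase (0:F)).card ≤ 2 := by
    calc (Finset.univ.erase (0:F)).card ≤ p.roots.toFinset.card := Finset.card_le_card hsub
    _ ≤ Multiset.card p.roots := Multiset.toFinset_card_le _
    _ ≤ p.natDegree := Polynomial.card_roots' p
    _ = 2 := hdeg
  rw [Finset.card_erase_of_mem (Finset.mem_univ _), Finset.card_univ] at h2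
  omega

lemma exists_invertible_submatrix {k n : ℕ} (v : Fin k → (Fin n → F))
    (hv : LinearIndependent F v) :
    ∃ s : Fin k → Fin n, Function.Injective s ∧
      (Matrix.of fun i l => v i (s l)).det ≠ 0 := by
  classical
  set W : Matrix (Fin k) (Fin n) F := Matrix.of v with hW
  have hrank : W.rank = k := by
    rw [Matrix.rank_eq_finrank_span_row]
    have h' : LinearIndependent F (fun i => W i) := hv
    rw [show W.row = fun i => W i from rfl, finrank_span_eq_card h', Fintype.card_fin]
  have hspan : Submodule.span F (Set.range Wᵀ) = ⊤ := by
    apply Submodule.eq_top_of_finrank_eq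
    rw [show Set.range Wᵀ = Set.range W.col from rfl, ← Matrix.rank_eq_finrank_span_cols, hrank, Module.finrank_fin_fun]
  obtain ⟨t, hts, htspan, htli⟩ := exists_linearIndependent F (Set.range Wᵀ)
  rw [hspan] at htspan
  have htfin : t.Finite := htli.setFinite
  have : Fintype t := htfin.fintype
  let B : Module.Basis t F (Fin k → F) := Module.Basis.mk htli (by rw [Subtype.range_coe, htspan])
  let e : t ≃ Fin k := B.indexEquiv (Pi.basisFun F (Fin k))
  have hex : ∀ l : Fin k, ∃ j : Fin n, Wᵀ j = (e.symm l : Fin k → F) :=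
    fun l => hts (e.symm l).2
  choose s hs using hex
  have hsinj : Function.Injective s := by
    intro l l' hll
    have : (e.symm l : Fin k → F) = (e.symm l' : Fin k → F) := by
      rw [← hs l, ← hs l', hll]
    exact e.symm.injective (Subtype.coe_injective this)
  refine ⟨s, hsinj, ?_⟩
  have hcols : LinearIndependent F (fun l => (Matrix.of fun i l => v i (s l))ᵀ l) := by
    have : (fun l => (Matrix.of fun i l => v i (s l))ᵀ l) = fun l => (B (e.symm l)) := by
      funext l
      have : (Matrix.of fun i l => v i (s l))ᵀ l = Wᵀ (s l) := by
        funext i; rfl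
      rw [this, hs l, Module.Basis.mk_apply]
    rw [this]
    exact B.linearIndependent.comp e.symm e.symm.injective
  have := Matrix.linearIndependent_cols_iff_isUnit.mp hcols
  have hdet := Matrix.isUnit_iff_isUnit_det _ |>.mp this
  exact hdet.ne_zero

end AuxLCD

/-- Let `q > 3` be a prime power and `C` an `[n,k,d]` linear code over `F_q`.
Then there exists `a ∈ F_q^n` with all `a_j ≠ 0` such that `C_a` is an
Euclidean LCD code; hence `C` is equivalent to an Euclidean LCD code. -/
theorem exists_equivalent_euclidean_lcd
    (q : ℕ) (hq : ∃ p m : ℕ, p.Prime ∧ 0 < m ∧ q = p ^ m) (hq3 : 3 < q)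
    {F : Type*} [Field F] [Fintype F] [DecidableEq F] (hcard : Fintype.card F = q)
    {n k d : ℕ}
    (C : Submodule F (Fin n → F))
    (hdim : Module.finrank F C = k) (hd : minDist C = d) :
    ∃ a : Fin n → F, (∀ j : Fin n, a j ≠ 0) ∧
      (Submodule.map (scaleMap a) C) ⊓ dualCode (Submodule.map (scaleMap a) C) = ⊥ := by
  classical
  set k' := Module.finrank F ↥C with hk'
  let B := Module.finBasis F ↥C
  let v : Fin k' → (Fin n → F) := fun i => (B i : Fin n → F)
  have hvli : LinearIndependent F v := B.linearIndependent.map' C.subtype C.ker_subtype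
  have hvspan : Submodule.span F (Set.range v) = C := by
    have h1 : Set.range v = C.subtype '' Set.range B := by
      rw [← Set.range_comp]; rfl
    rw [h1, Submodule.span_image, B.span_eq, Submodule.map_subtype_top]
  obtain ⟨s, hsinj, hdetA⟩ := exists_invertible_submatrix v hvli
  set G : Matrix (Fin k') (Fin n) F := Matrix.of v with hG
  set A : Matrix (Fin k') (Fin k') F := Matrix.of fun i l => v i (s l) with hA
  set Φ : (Fin n → F) → F := fun b => (G * diagonal b * Gᵀ).det with hΦ
  set b0 : Fin n → F := fun j => if j ∈ Finset.univ.image s then 1 else 0 with hb0def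
  have hbase : G * diagonal b0 * Gᵀ = A * Aᵀ := by
    ext i i'
    have hL : (G * diagonal b0 * Gᵀ) i i' = ∑ j, v i j * b0 j * v i' j := by
      rw [Matrix.mul_apply]
      apply Finset.sum_congr rfl
      intro j _
      rw [Matrix.mul_diagonal, Matrix.transpose_apply]
      rfl
    have hR : (A * Aᵀ) i i' = ∑ l, v i (s l) * v i' (s l) := by
      rw [Matrix.mul_apply]
      apply Finset.sum_congr rfl
      intro l _
      rw [Matrix.transpose_apply]
      rfl
    rw [hL, hR]
    have hterm : ∀ j : Fin n, v i j * b0 j * v i' j =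
        if j ∈ Finset.univ.image s then v i j * v i' j else 0 := by
      intro j
      have hb : b0 j = if j ∈ Finset.univ.image s then 1 else 0 := rfl
      rw [hb]
      split_ifs <;> ring
    rw [Finset.sum_congr rfl fun j _ => hterm j, Finset.sum_ite_mem, Finset.univ_inter,
      Finset.sum_image (fun x _ y _ h => hsinj h)]
  have hb0 : Φ b0 ≠ 0 := by
    show (G * diagonal b0 * Gᵀ).det ≠ 0
    rw [hbase, Matrix.det_mul, Matrix.det_transpose]
    exact mul_ne_zero hdetA hdetA
  set T : Finset F := (Finset.univ.erase (0:F)).image (fun x => x * x) with hTdef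
  have hT : 2 ≤ T.card := squares_card (by rw [hcard]; exact hq3)
  have hΦaff : ∀ (j : Fin n) (b : Fin n → F),
      ∃ α β : F, ∀ t, Φ (Function.update b j t) = α + t * β :=
    fun j b => phi_multiaffine G j b
  obtain ⟨b, hbT, hbne⟩ := multiaffine_grid Φ hΦaff T hT b0 hb0
  have hex : ∀ j, ∃ x : F, x ≠ 0 ∧ x * x = b j := by
    intro j
    obtain ⟨x, hx, hxx⟩ := Finset.mem_image.mp (hbT j)
    exact ⟨x, (Finset.mem_erase.mp hx).1, hxx⟩
  choose a ha0 haa using hex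
  refine ⟨a, ha0, ?_⟩
  set Ga : Matrix (Fin k') (Fin n) F := Matrix.of fun i j => a j * v i j with hGadef
  have hGa : Ga * Gaᵀ = G * diagonal b * Gᵀ := by
    ext i i'
    have hL : (Ga * Gaᵀ) i i' = ∑ j, (a j * v i j) * (a j * v i' j) := by
      rw [Matrix.mul_apply]
      apply Finset.sum_congr rfl
      intro j _
      rw [Matrix.transpose_apply]
      rfl
    have hR : (G * diagonal b * Gᵀ) i i' = ∑ j, v i j * b j * v i' j := by
      rw [Matrix.mul_apply]
      apply Finset.sum_congr rfl
      intro j _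
      rw [Matrix.mul_diagonal, Matrix.transpose_apply]
      rfl
    rw [hL, hR]
    apply Finset.sum_congr rfl
    intro j _
    rw [← haa j]
    ring
  have hdet : (Ga * Gaᵀ).det ≠ 0 := by
    rw [hGa]; exact hbne
  have hmap : Submodule.map (scaleMap a) C = Submodule.span F (Set.range fun i => Ga i) := by
    rw [← hvspan, Submodule.map_span, ← Set.range_comp]
    congr 1
  rw [hmap, eq_bot_iff]
  intro x hx
  rw [Submodule.mem_inf] at hx
  obtain ⟨hx1, hx2⟩ := hx
  obtain ⟨y, hy⟩ := Submodule.mem_span_range_iff_exists_fun F |>.mp hx1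
  have hx2' : ∀ c ∈ Submodule.span F (Set.range fun i => Ga i), x ⬝ᵥ c = 0 := hx2
  have horth : ∀ i, x ⬝ᵥ Ga i = 0 := fun i =>
    hx2' (Ga i) (Submodule.subset_span ⟨i, rfl⟩)
  have hxj : ∀ j, x j = ∑ i', y i' * Ga i' j := by
    intro j
    rw [← hy]
    simp [Finset.sum_apply]
  have hw : (Ga * Gaᵀ) *ᵥ y = 0 := by
    funext i
    have h1 : ((Ga * Gaᵀ) *ᵥ y) i = ∑ i', (∑ j, Ga i j * Ga i' j) * y i' := by
      simp [Matrix.mulVec, dotProduct, Matrix.mul_apply, Matrix.transpose_apply]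
    have h2 : ∑ i', (∑ j, Ga i j * Ga i' j) * y i' = ∑ j, Ga i j * x j := by
      have e1 : ∀ i' : Fin k', (∑ j, Ga i j * Ga i' j) * y i'
          = ∑ j, Ga i j * Ga i' j * y i' := fun i' => Finset.sum_mul _ _ _
      rw [Finset.sum_congr rfl fun i' _ => e1 i', Finset.sum_comm]
      apply Finset.sum_congr rfl
      intro j _
      rw [hxj j, Finset.mul_sum]
      apply Finset.sum_congr rfl
      intro i' _
      ring
    have h3 : ∑ j, Ga i j * x j = x ⬝ᵥ Ga i := by
      rw [dotProduct]
      apply Finset.sum_congr rfl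
      intro j _
      ring
    rw [h1]
    show _ = (0 : Fin k' → F) i
    rw [h2, h3, horth i]
    rfl
  have hyzero : y = 0 := by
    have hunit : IsUnit (Ga * Gaᵀ).det := isUnit_iff_ne_zero.mpr hdet
    have hinv := Matrix.nonsing_inv_mul (Ga * Gaᵀ) hunit
    calc y = (1 : Matrix (Fin k') (Fin k') F) *ᵥ y := (Matrix.one_mulVec y).symm
      _ = ((Ga * Gaᵀ)⁻¹ * (Ga * Gaᵀ)) *ᵥ y := by rw [hinv]
      _ = (Ga * Gaᵀ)⁻¹ *ᵥ ((Ga * Gaᵀ) *ᵥ y) := by rw [Matrix.mulVec_mulVec]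
      _ = 0 := by rw [hw, Matrix.mulVec_zero]
  have hxz : x = 0 := by
    rw [← hy, hyzero]
    simp
  rw [hxz]
  exact Submodule.zero_mem ⊥
end

section
/- Let q be a prime power and let C be an [n,k,d] linear code over F_{q²} with generator matrix G = [I_k : P] in standard form. Let M = G·(conj G)ᵀ, where conj G is obtained from G by raising every entry to the q-th power. Let t ≤ k−1 be a non-negative integer such that det(M_I) = 0 for every subset I of {1,…,k} with 0 ≤ |I| ≤ t, and suppose there exists J ⊆ {1,…,k} of size t+1 with det(M_J) ≠ 0. Let a ∈ F_{q²}^n be any word such that a_j^{q+1} ≠ 1 for j ∈ J (i.e., a_j ∈ F_{q²} \ (F_{q²}^×)^{q−1}) and a_j^{q+1} = 1 for j ∈ {1,…,n} \ J (i.e., a_j ∈ (F_{q²}^×)^{q−1}). Then the code C_a is a Hermitian LCD [n,k] linear code. Furthermore, if in addition a_j ≠ 0 for all j, then C_a is a Hermitian LCD [n,k,d] linear code. -/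
open Matrix

section auxlemmas
variable {F : Type*} [Field F] {k : ℕ}

lemma det_rows_single (N : Matrix (Fin k) (Fin k) F) (S : Finset (Fin k))
    (hN : ∀ i ∈ S, N i = Pi.single i 1) :
    N.det = (deleteRC N S).det := by
  classical
  let e : {i : Fin k // i ∈ S} ⊕ {i : Fin k // i ∉ S} ≃ Fin k := Equiv.sumCompl (· ∈ S)
  rw [← Matrix.det_submatrix_equiv_self e N]
  have hblock : N.submatrix e e =
      Matrix.fromBlocks 1 0 (Matrix.of fun i j => N i.1 j.1) (deleteRC N S) := by
    ext i j
    cases i with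
    | inl i =>
      cases j with
      | inl j =>
        have h := hN i.1 i.2
        simp only [Matrix.submatrix_apply, Equiv.sumCompl_apply_inl, e, h,
          Matrix.fromBlocks_apply₁₁, Pi.single_apply, Matrix.one_apply]
        by_cases hij : i = j
        · simp [hij]
        · rw [if_neg (fun hh => hij (Subtype.ext hh.symm)), if_neg hij]
      | inr j =>
        have h := hN i.1 i.2
        have hne : j.1 ≠ i.1 := fun hh => j.2 (hh ▸ i.2)
        simp [Matrix.submatrix_apply, e, h, Pi.single_apply, hne]
    | inr i => cases j <;> rfl
  rw [hblock, Matrix.det_fromBlocks_zero₁₂, Matrix.det_one, one_mul]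

lemma det_add_diagonal_eq (M : Matrix (Fin k) (Fin k) F) (dv : Fin k → F)
    (J : Finset (Fin k)) (hd0 : ∀ j, j ∉ J → dv j = 0) (t : ℕ)
    (hJcard : J.card = t + 1)
    (h0 : ∀ S : Finset (Fin k), S.card ≤ t → (deleteRC M S).det = 0) :
    (M + Matrix.diagonal dv).det = (∏ j ∈ J, dv j) * (deleteRC M J).det := by
  classical
  have hdet : (M + Matrix.diagonal dv).det
      = ∑ S : Finset (Fin k),
          Matrix.det (Matrix.of (S.piecewise (fun i => Matrix.diagonal dv i) (fun i => M i))) := by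
    rw [add_comm]
    exact (Matrix.detRowAlternating :
      (Fin k → F) [⋀^Fin k]→ₗ[F] F).toMultilinearMap.map_add_univ
      (fun i => Matrix.diagonal dv i) (fun i => M i)
  have hval : ∀ S : Finset (Fin k),
      Matrix.det (Matrix.of (S.piecewise (fun i => Matrix.diagonal dv i) (fun i => M i)))
        = (∏ j ∈ S, dv j) * (deleteRC M S).det := by
    intro S
    set N : Matrix (Fin k) (Fin k) F :=
      Matrix.of (S.piecewise (fun i => Pi.single i 1) (fun i => M i)) with hNdef
    have hrow : S.piecewise (fun i => Matrix.diagonal dv i) (fun i => M i)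
        = S.piecewise (fun i => dv i • N i) (fun i => N i) := by
      ext i l
      by_cases hi : i ∈ S
      · simp only [Finset.piecewise_eq_of_mem _ _ _ hi, hNdef, Matrix.of_apply,
          Matrix.diagonal_apply, Pi.smul_apply, Finset.piecewise_eq_of_mem _ _ _ hi,
          Pi.single_apply, smul_eq_mul]
        by_cases hil : i = l
        · simp [hil]
        · rw [if_neg hil, if_neg (fun hh => hil hh.symm), mul_zero]
      · simp [Finset.piecewise_eq_of_notMem _ _ _ hi, hNdef]
    have hfac := (Matrix.detRowAlternating :
      (Fin k → F) [⋀^Fin k]→ₗ[F] F).toMultilinearMap.map_piecewise_smul dv (fun i => N i) S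
    have hNdet : N.det = (deleteRC M S).det := by
      have h1 : N.det = (deleteRC N S).det :=
        det_rows_single N S (fun i hi =>
          show (S.piecewise (fun i => Pi.single i 1) (fun i => M i)) i = _ from
            Finset.piecewise_eq_of_mem _ _ _ hi)
      have h2 : deleteRC N S = deleteRC M S := by
        ext i j
        simp [deleteRC, hNdef, Finset.piecewise_eq_of_notMem _ _ _ i.2]
      rw [h1, h2]
    calc Matrix.det (Matrix.of (S.piecewise (fun i => Matrix.diagonal dv i) (fun i => M i)))
        = Matrix.det (Matrix.of (S.piecewise (fun i => dv i • N i) (fun i => N i))) := by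
          rw [hrow]
      _ = (∏ j ∈ S, dv j) * N.det := hfac
      _ = (∏ j ∈ S, dv j) * (deleteRC M S).det := by rw [hNdet]
  rw [hdet]
  rw [Fintype.sum_eq_single J]
  · exact hval J
  · intro S hSJ
    by_cases hSsub : S ⊆ J
    · have hcard : S.card ≤ t := by
        have := Finset.card_lt_card (Finset.ssubset_iff_subset_ne.mpr ⟨hSsub, hSJ⟩)
        omega
      rw [hval S, h0 S hcard, mul_zero]
    · obtain ⟨j, hjS, hjJ⟩ := Finset.not_subset.mp hSsub
      apply Matrix.det_eq_zero_of_row_eq_zero j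
      intro l
      simp [Finset.piecewise_eq_of_mem _ _ _ hjS, Matrix.diagonal_apply, hd0 j hjJ]

end auxlemmas

/-- Let `C` be an `[n,k,d]` linear code over `F_{q²}` with generator matrix
`G = [I_k : P]` in standard form and `M = G * (conj G)ᵀ`, where `conj G`
raises every entry of `G` to the `q`-th power.  Suppose `det (M_I) = 0` for
all `I` with `|I| ≤ t ≤ k - 1` and `det (M_J) ≠ 0` for some `J` of size `t+1`.
If `a ∈ F_{q²}^n` satisfies `a_j^{q+1} ≠ 1` for `j ∈ J` and `a_j^{q+1} = 1`
otherwise, then `C_a` is a Hermitian LCD `[n,k]` code; if moreover all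
`a_j ≠ 0` then `C_a` is a Hermitian LCD `[n,k,d]` code. -/
theorem scaled_code_is_hermitian_lcd
    (q : ℕ) (hq : ∃ p m : ℕ, p.Prime ∧ 0 < m ∧ q = p ^ m)
    {F : Type*} [Field F] [Fintype F] [DecidableEq F] (hcard : Fintype.card F = q ^ 2)
    {n k d : ℕ} (hkn : k ≤ n)
    (C : Submodule F (Fin n → F))
    (hdim : Module.finrank F C = k) (hd : minDist C = d)
    (G : Matrix (Fin k) (Fin n) F)
    (hstd : ∀ i j : Fin k, G i (Fin.castLE hkn j) = if i = j then 1 else 0)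
    (hspan : Submodule.span F (Set.range G) = C)
    (t : ℕ) (ht : t + 1 ≤ k)
    (h0 : ∀ I : Finset (Fin k), I.card ≤ t →
      (deleteRC (G * (G.map (· ^ q))ᵀ) I).det = 0)
    (J : Finset (Fin k)) (hJcard : J.card = t + 1)
    (hJ : (deleteRC (G * (G.map (· ^ q))ᵀ) J).det ≠ 0)
    (a : Fin n → F)
    (haJ : ∀ j ∈ J, a (Fin.castLE hkn j) ^ (q + 1) ≠ 1)
    (haNJ : ∀ i : Fin n, (∀ j ∈ J, Fin.castLE hkn j ≠ i) → a i ^ (q + 1) = 1) :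
    (Submodule.map (scaleMap a) C) ⊓ hdualCode q (Submodule.map (scaleMap a) C) = ⊥
    ∧ Module.finrank F (Submodule.map (scaleMap a) C) = k
    ∧ ((∀ i : Fin n, a i ≠ 0) → minDist (Submodule.map (scaleMap a) C) = d) := by
  classical
  obtain ⟨p, m, hp, hm, rfl⟩ := hq
  have hq0 : p ^ m ≠ 0 := pow_ne_zero m hp.pos.ne'
  set q := p ^ m with hqdef
  -- basic facts
  have hsm : ∀ (v : Fin n → F) (i : Fin n), scaleMap a v i = a i * v i := fun v i => rfl
  set M : Matrix (Fin k) (Fin k) F := G * (G.map (· ^ q))ᵀ with hM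
  set Ga : Matrix (Fin k) (Fin n) F := Matrix.of (fun i j => G i j * a j) with hGa
  set Ma : Matrix (Fin k) (Fin k) F := Ga * (Ga.map (· ^ q))ᵀ with hMa
  set dv : Fin k → F := fun j => if j ∈ J then a (Fin.castLE hkn j) ^ (q + 1) - 1 else 0
    with hdv
  have hcastinj : Function.Injective (Fin.castLE hkn) := fun x y h => by
    simpa [Fin.ext_iff] using congrArg Fin.val h
  -- Ma = M + diagonal dv
  have hMaM : Ma = M + Matrix.diagonal dv := by
    ext r s
    rw [hMa, hM]
    simp only [Matrix.mul_apply, Matrix.transpose_apply, Matrix.map_apply, hGa,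
      Matrix.of_apply, Matrix.add_apply]
    have h1 : ∀ j : Fin n, (G r j * a j) * ((G s j * a j) ^ q)
        = G r j * (G s j) ^ q + G r j * (G s j) ^ q * (a j ^ (q + 1) - 1) := by
      intro j
      rw [mul_pow, pow_succ']
      ring
    simp only [h1, Finset.sum_add_distrib]
    congr 1
    have h2 : ∀ j ∈ Finset.univ \ J.image (Fin.castLE hkn),
        G r j * (G s j) ^ q * (a j ^ (q + 1) - 1) = 0 := by
      intro j hj
      rw [haNJ j, sub_self, mul_zero]
      intro j' hj' he
      exact (Finset.mem_sdiff.mp hj).2 (he ▸ Finset.mem_image_of_mem _ hj')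
    rw [← Finset.sum_subset (Finset.subset_univ (J.image (Fin.castLE hkn)))
      (fun j _ hj => h2 j (Finset.mem_sdiff.mpr ⟨Finset.mem_univ j, hj⟩))]
    rw [Finset.sum_image (fun x _ y _ h => hcastinj h)]
    calc ∑ j' ∈ J, G r (Fin.castLE hkn j') * (G s (Fin.castLE hkn j')) ^ q
            * (a (Fin.castLE hkn j') ^ (q + 1) - 1)
        = ∑ j' ∈ J, (if j' = r then
            (if s = j' then a (Fin.castLE hkn j') ^ (q + 1) - 1 else 0) else 0) := by
          refine Finset.sum_congr rfl fun j' _ => ?_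
          rw [hstd r j', hstd s j']
          by_cases h1 : r = j' <;> by_cases h2 : s = j' <;>
            simp [h1, h2, zero_pow hq0, eq_comm]
      _ = if r ∈ J then (if s = r then a (Fin.castLE hkn r) ^ (q + 1) - 1 else 0) else 0 := by
          rw [Finset.sum_ite_eq' J r
            (fun j' => if s = j' then a (Fin.castLE hkn j') ^ (q + 1) - 1 else 0)]
      _ = Matrix.diagonal dv r s := by
          rw [Matrix.diagonal_apply, hdv]
          by_cases hrs : r = s <;> by_cases hrJ : r ∈ J <;>
            simp [hrs, hrJ, eq_comm]
  -- det Ma ≠ 0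
  have hprod : (∏ j ∈ J, dv j) ≠ 0 := by
    rw [Finset.prod_ne_zero_iff]
    intro j hj
    rw [hdv]
    simp only [hj, if_true]
    exact sub_ne_zero_of_ne (haJ j hj)
  have hMadet : Ma.det ≠ 0 := by
    rw [hMaM, det_add_diagonal_eq M dv J (fun j hj => if_neg hj) t hJcard h0]
    exact mul_ne_zero hprod hJ
  have hMainv : ∀ x : Fin k → F, x ᵥ* Ma = 0 → x = 0 := by
    intro x hx
    have hu : IsUnit Ma.det := isUnit_iff_ne_zero.mpr hMadet
    have h := congrArg (· ᵥ* Ma⁻¹) hx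
    simpa [Matrix.vecMul_vecMul, Matrix.mul_nonsing_inv Ma hu] using h
  -- key dot-product computation
  have hdot : ∀ (x : Fin k → F) (s : Fin k),
      (scaleMap a (∑ r, x r • G r)) ⬝ᵥ (fun i => (scaleMap a (G s) i) ^ q)
        = (x ᵥ* Ma) s := by
    intro x s
    simp only [Matrix.vecMul, dotProduct, hMa, Matrix.mul_apply,
      Matrix.transpose_apply, Matrix.map_apply, hGa, Matrix.of_apply, hsm,
      Finset.sum_apply, Pi.smul_apply, smul_eq_mul]
    calc ∑ i, (a i * ∑ r, x r * G r i) * (a i * G s i) ^ q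
        = ∑ i, ∑ r, x r * (G r i * a i * (G s i * a i) ^ q) := by
          refine Finset.sum_congr rfl fun i _ => ?_
          rw [Finset.mul_sum, Finset.sum_mul]
          exact Finset.sum_congr rfl fun r _ => by ring
      _ = ∑ r, ∑ i, x r * (G r i * a i * (G s i * a i) ^ q) := Finset.sum_comm
      _ = ∑ r, x r * ∑ i, G r i * a i * (G s i * a i) ^ q :=
          Finset.sum_congr rfl fun r _ => (Finset.mul_sum _ _ _).symm
  -- membership facts
  have hmemC : ∀ c ∈ C, ∃ x : Fin k → F, c = ∑ r, x r • G r := by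
    intro c hc
    rw [← hspan] at hc
    obtain ⟨x, hx⟩ := (Submodule.mem_span_range_iff_exists_fun F).mp hc
    exact ⟨x, hx.symm⟩
  have hGmem : ∀ s : Fin k, G s ∈ C := fun s =>
    hspan ▸ Submodule.subset_span (Set.mem_range_self s)
  refine ⟨?_, ?_, ?_⟩
  · -- LCD
    rw [eq_bot_iff]
    intro v hv
    obtain ⟨hv1, hv2⟩ := Submodule.mem_inf.mp hv
    obtain ⟨c, hc, rfl⟩ := hv1
    obtain ⟨x, rfl⟩ := hmemC c hc
    have hx : x ᵥ* Ma = 0 := by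
      funext s
      have hy : scaleMap a (G s) ∈ Submodule.map (scaleMap a) C :=
        ⟨G s, hGmem s, rfl⟩
      have h := hv2 (scaleMap a (G s)) hy
      rw [Pi.zero_apply, ← hdot x s]
      exact h
    have hx0 := hMainv x hx
    subst hx0
    simp only [Submodule.mem_bot]
    simp
  · -- dimension
    have hrange : Submodule.map (scaleMap a) C
        = LinearMap.range ((scaleMap a) ∘ₗ C.subtype) := by
      rw [LinearMap.range_comp, Submodule.range_subtype]
    have hinj : Function.Injective ((scaleMap a) ∘ₗ C.subtype) := by
      rw [← LinearMap.ker_eq_bot, LinearMap.ker_eq_bot']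
      intro c hc0
      obtain ⟨x, hx⟩ := hmemC c.1 c.2
      have hc0' : scaleMap a c.1 = 0 := hc0
      have hxv : x ᵥ* Ma = 0 := by
        funext s
        rw [Pi.zero_apply, ← hdot x s, ← hx, hc0', zero_dotProduct]
      have hx0 := hMainv x hxv
      subst hx0
      apply Subtype.ext
      rw [hx]
      simp
    rw [hrange, LinearMap.finrank_range_of_inj hinj]
    exact hdim
  · -- min distance
    intro ha
    have hsm_inj : Function.Injective (scaleMap a) := by
      intro u v huv
      funext i
      have h := congrFun huv i
      rw [hsm, hsm] at h
      exact mul_left_cancel₀ (ha i) h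
    have hnorm : ∀ c : Fin n → F, hammingNorm (scaleMap a c) = hammingNorm c := by
      intro c
      simp only [hammingNorm]
      congr 1
      ext i
      simp [hsm, mul_ne_zero_iff, ha i]
    have hset : {w | ∃ c ∈ Submodule.map (scaleMap a) C, c ≠ 0 ∧ hammingNorm c = w}
        = {w | ∃ c ∈ C, c ≠ 0 ∧ hammingNorm c = w} := by
      ext w
      simp only [Set.mem_setOf_eq, Submodule.mem_map]
      constructor
      · rintro ⟨c', ⟨c, hc, rfl⟩, hne, hw⟩
        exact ⟨c, hc, fun h => hne (by rw [h, map_zero]),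
          by rw [← hnorm c]; exact hw⟩
      · rintro ⟨c, hc, hne, hw⟩
        exact ⟨scaleMap a c, ⟨c, hc, rfl⟩,
          fun h => hne (hsm_inj (h.trans (map_zero _).symm)), (hnorm c).trans hw⟩
    unfold minDist at hd ⊢
    rw [hset]
    exact hd
end

section
/- Let q be a prime power and let C be an [n,k,d] linear code over F_{q²} with generator matrix G = [I_k : P] in standard form. Let M = G·(conj G)ᵀ, where conj G is obtained from G by raising every entry to the q-th power. Let t ≤ k−1 be a non-negative integer such that det(M_I) = 0 for every subset I of {1,…,k} with 0 ≤ |I| ≤ t, and suppose there exists J ⊆ {1,…,k} of size t+1 with det(M_J) ≠ 0. Then t ≥ h_H(C) − 1, where h_H(C) is the dimension of the Hermitian hull of C. -/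
open Matrix

/-- Let `C` be an `[n,k,d]` linear code over `F_{q²}` with generator matrix
`G = [I_k : P]` in standard form and `M = G * (conj G)ᵀ`.  Suppose
`det (M_I) = 0` for every `I` with `|I| ≤ t ≤ k - 1`, and `det (M_J) ≠ 0` for
some `J` of size `t + 1`.  Then `t ≥ h_H(C) - 1`, i.e. `h_H(C) ≤ t + 1`, where
`h_H(C)` is the dimension of the Hermitian hull `C ⊓ C^{⊥_H}`. -/
theorem hermitian_hull_dim_le_of_principal_minor_nonzero
    (q : ℕ) (hq : ∃ p m : ℕ, p.Prime ∧ 0 < m ∧ q = p ^ m)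
    {F : Type*} [Field F] [Fintype F] [DecidableEq F] (hcard : Fintype.card F = q ^ 2)
    {n k d : ℕ} (hkn : k ≤ n)
    (C : Submodule F (Fin n → F))
    (hdim : Module.finrank F C = k) (hd : minDist C = d)
    (G : Matrix (Fin k) (Fin n) F)
    (hstd : ∀ i j : Fin k, G i (Fin.castLE hkn j) = if i = j then 1 else 0)
    (hspan : Submodule.span F (Set.range G) = C)
    (t : ℕ) (ht : t + 1 ≤ k)
    (h0 : ∀ I : Finset (Fin k), I.card ≤ t →
      (deleteRC (G * (G.map (· ^ q))ᵀ) I).det = 0)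
    (J : Finset (Fin k)) (hJcard : J.card = t + 1)
    (hJ : (deleteRC (G * (G.map (· ^ q))ᵀ) J).det ≠ 0) :
    Module.finrank F ↥(C ⊓ hdualCode q C) ≤ t + 1 := by
  classical
  set Mq : Matrix (Fin k) (Fin k) F := G * (G.map (· ^ q))ᵀ with hMq
  have hrow : ∀ i : Fin k, G i ∈ C := fun i => by
    rw [← hspan]; exact Submodule.subset_span ⟨i, rfl⟩
  -- The hull maps into the left kernel of Mq
  have hull_le : C ⊓ hdualCode q C ≤
      Submodule.map (Matrix.vecMulLinear G) (LinearMap.ker (Matrix.vecMulLinear Mq)) := by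
    rintro v ⟨hvC, hvD⟩
    have hvR : v ∈ LinearMap.range (Matrix.vecMulLinear G) := by
      rw [range_vecMulLinear]; change v ∈ Submodule.span F (Set.range G); rw [hspan]; exact hvC
    obtain ⟨x, hx⟩ := hvR
    refine ⟨x, ?_, hx⟩
    simp only [SetLike.mem_coe, LinearMap.mem_ker]
    funext i
    have hcomp : Matrix.vecMulLinear Mq x i = v ⬝ᵥ (fun j => (G i j) ^ q) := by
      subst hx
      rw [Matrix.vecMulLinear_apply, Matrix.vecMulLinear_apply, hMq,
        ← Matrix.vecMul_vecMul, Matrix.vecMul_transpose]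
      simp [Matrix.mulVec, dotProduct, Matrix.map_apply, mul_comm]
    have h0' := hvD (G i) (hrow i)
    simp [hcomp, h0']
  -- dimension of the hull is at most dim of the kernel
  have h1 : Module.finrank F ↥(C ⊓ hdualCode q C) ≤
      Module.finrank F ↥(LinearMap.ker (Matrix.vecMulLinear Mq)) :=
    le_trans (Submodule.finrank_mono hull_le) (Submodule.finrank_map_le _ _)
  -- rank-nullity
  have hrn := LinearMap.finrank_range_add_finrank_ker (Matrix.vecMulLinear Mq)
  have hfr : Module.finrank F (Fin k → F) = k := by simp
  rw [hfr] at hrn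
  -- range of vecMulLinear Mq has dimension rank Mq
  have hvm : Matrix.vecMulLinear Mq = Matrix.mulVecLin Mqᵀ := by
    ext x i
    simp [Matrix.vecMulLinear_apply, Matrix.mulVecLin_apply, Matrix.mulVec_transpose]
  have hrange : Module.finrank F ↥(LinearMap.range (Matrix.vecMulLinear Mq)) = Mq.rank := by
    rw [hvm, ← Matrix.rank, Matrix.rank_transpose]
  rw [hrange] at hrn
  -- rank lower bound from the nonzero minor
  have hcards : Fintype.card {i : Fin k // i ∉ J} = k - (t + 1) := by
    rw [Fintype.card_subtype_compl]
    simp [hJcard]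
  have hdetU : IsUnit (Mq.submatrix (Subtype.val : {i : Fin k // i ∉ J} → Fin k) (Subtype.val : {i : Fin k // i ∉ J} → Fin k)) := by
    rw [Matrix.isUnit_iff_isUnit_det, isUnit_iff_ne_zero]
    exact hJ
  have hsubrank : (Mq.submatrix (Subtype.val : {i : Fin k // i ∉ J} → Fin k) (Subtype.val : {i : Fin k // i ∉ J} → Fin k)).rank
      = k - (t + 1) := by
    rw [Matrix.rank_of_isUnit _ hdetU, hcards]
  have step2 : (Mq.submatrix (Subtype.val : {i : Fin k // i ∉ J} → Fin k) id).rank ≤ Mq.rank := by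
    rw [Matrix.rank_eq_finrank_span_row, Matrix.rank_eq_finrank_span_row]
    apply Submodule.finrank_mono
    apply Submodule.span_mono
    rintro _ ⟨i, rfl⟩
    exact ⟨i.1, rfl⟩
  have step1 : (Mq.submatrix (Subtype.val : {i : Fin k // i ∉ J} → Fin k) (Subtype.val : {i : Fin k // i ∉ J} → Fin k)).rank ≤
      (Mq.submatrix (Subtype.val : {i : Fin k // i ∉ J} → Fin k) id).rank := by
    rw [Matrix.rank_eq_finrank_span_cols, Matrix.rank_eq_finrank_span_cols]
    apply Submodule.finrank_mono
    apply Submodule.span_mono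
    rintro _ ⟨j, rfl⟩
    exact ⟨j.1, rfl⟩
  have hlow : k - (t + 1) ≤ Mq.rank := hsubrank ▸ le_trans step1 step2
  omega
end

section
/- Let q be a prime power with q > 2 and let C be an [n,k,d] linear code over F_{q²}. Then there exists a = (a_1,…,a_n) ∈ F_{q²}^n with a_j ≠ 0 for every 1 ≤ j ≤ n such that the code C_a is a Hermitian LCD code (hence C is equivalent to a Hermitian LCD code). -/
open Matrix

/-- Determinant of a rank-one update is an affine function of the scaling. -/
lemma det_affine {K : Type*} [Field K] {k : ℕ} (B : Matrix (Fin k) (Fin k) K)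
    (hB : IsUnit B.det) (c r : Fin k → K) :
    ∃ w : K, ∀ x : K,
      (B + Matrix.of (fun i j => x * (c i * r j))).det = B.det * (1 + x * w) := by
  refine ⟨(Matrix.vecMul r B⁻¹) ⬝ᵥ c, fun x => ?_⟩
  have hcr : Matrix.of (fun i j => x * (c i * r j))
      = Matrix.replicateCol Unit (x • c) * Matrix.replicateRow Unit r := by
    ext i j
    simp [Matrix.mul_apply, mul_assoc, mul_comm, mul_left_comm]
  rw [hcr, Matrix.det_add_replicateCol_mul_replicateRow hB]
  congr 1
  rw [Matrix.det_unique]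
  simp [Matrix.mul_apply, dotProduct, Matrix.vecMul, Finset.mul_sum, Finset.sum_mul,
    mul_assoc, mul_comm, mul_left_comm]

/-- If some scaling vector makes the Gram-type determinant nonzero, then one can
find such a scaling with all entries in any set `S` with at least two elements. -/
lemma exists_scaling_det_ne_zero {K : Type*} [Field K] {k n : ℕ}
    (u v : Fin n → Fin k → K) (S : Finset K) (hS : 1 < S.card) (μ : Fin n → K)
    (hμ : (Matrix.of fun i j => ∑ t, μ t * (u t i * v t j)).det ≠ 0) :
    ∃ lam : Fin n → K, (∀ t, lam t ∈ S) ∧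
      (Matrix.of fun i j => ∑ t, lam t * (u t i * v t j)).det ≠ 0 := by
  set M : (Fin n → K) → Matrix (Fin k) (Fin k) K :=
    fun lam => Matrix.of fun i j => ∑ t, lam t * (u t i * v t j) with hM
  suffices H : ∀ T : Finset (Fin n), ∃ lam, (∀ t ∈ T, lam t ∈ S) ∧ (M lam).det ≠ 0 by
    obtain ⟨lam, h1, h2⟩ := H Finset.univ
    exact ⟨lam, fun t => h1 t (Finset.mem_univ t), h2⟩
  intro T
  induction T using Finset.induction_on with
  | empty => exact ⟨μ, by simp, hμ⟩
  | @insert t T htT ih =>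
    obtain ⟨lam, h1, h2⟩ := ih
    have key : ∀ x : K, M (Function.update lam t x)
        = M lam + Matrix.of (fun i j => (x - lam t) * (u t i * v t j)) := by
      intro x
      ext i j
      simp only [hM, Matrix.of_apply, Matrix.add_apply]
      rw [← Finset.sum_erase_add _ _ (Finset.mem_univ t),
        ← Finset.sum_erase_add _ (fun t' => lam t' * (u t' i * v t' j)) (Finset.mem_univ t)]
      rw [Finset.sum_congr rfl (fun t' ht' =>
        by rw [Function.update_of_ne (Finset.mem_erase.mp ht').1])]
      rw [Function.update_self]
      ring
    obtain ⟨w, hw⟩ := det_affine (M lam) (Ne.isUnit h2) (u t) (v t)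
    have hex : ∃ s ∈ S, 1 + (s - lam t) * w ≠ 0 := by
      by_contra hcon
      push_neg at hcon
      obtain ⟨s₁, hs₁, s₂, hs₂, hne⟩ := Finset.one_lt_card.mp hS
      have e₁ := hcon s₁ hs₁
      have e₂ := hcon s₂ hs₂
      have hw0 : (s₁ - s₂) * w = 0 := by linear_combination e₁ - e₂
      rcases mul_eq_zero.mp hw0 with h | h
      · exact hne (sub_eq_zero.mp h)
      · rw [h, mul_zero, add_zero] at e₁
        exact one_ne_zero e₁
    obtain ⟨s, hsS, hs⟩ := hex
    refine ⟨Function.update lam t s, ?_, ?_⟩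
    · intro t' ht'
      rcases Finset.mem_insert.mp ht' with rfl | h'
      · simpa using hsS
      · rw [Function.update_of_ne (by rintro rfl; exact htT h')]
        exact h1 t' h'
    · rw [key s, hw (s - lam t)]
      exact mul_ne_zero h2 hs

/-- In a field with `q ^ 2` elements, `q > 2`, some nonzero element has
`(q+1)`-st power different from `1`. -/
lemma exists_pow_ne_one {K : Type*} [Field K] [Fintype K] [DecidableEq K]
    (q : ℕ) (hq2 : 2 < q) (hcard : Fintype.card K = q ^ 2) :
    ∃ c : K, c ≠ 0 ∧ c ^ (q + 1) ≠ 1 := by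
  by_contra hcon
  push_neg at hcon
  set P : Polynomial K := Polynomial.X ^ (q + 2) - Polynomial.X with hP
  have hdeg : P.natDegree = q + 2 := by
    rw [hP, Polynomial.natDegree_sub_eq_left_of_natDegree_lt]
    · exact Polynomial.natDegree_X_pow _
    · simp [Polynomial.natDegree_X_pow]
  have hP0 : P ≠ 0 := fun h => by simp [h] at hdeg
  have hroot : ∀ a : K, P.IsRoot a := by
    intro a
    rcases eq_or_ne a 0 with rfl | ha
    · simp [hP, Polynomial.IsRoot, zero_pow]
    · have := hcon a ha
      simp only [hP, Polynomial.IsRoot, Polynomial.eval_sub, Polynomial.eval_pow,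
        Polynomial.eval_X, sub_eq_zero]
      calc a ^ (q + 2) = a ^ (q + 1) * a := by ring
        _ = a := by rw [this, one_mul]
  have hsub : (Finset.univ : Finset K) ⊆ P.roots.toFinset := by
    intro a _
    rw [Multiset.mem_toFinset, Polynomial.mem_roots hP0]
    exact hroot a
  have h1 : Fintype.card K ≤ P.roots.toFinset.card := by
    simpa using Finset.card_le_card hsub
  have h2 : P.roots.toFinset.card ≤ Multiset.card P.roots := Multiset.toFinset_card_le _
  have h3 : Multiset.card P.roots ≤ q + 2 := hdeg ▸ P.card_roots'
  rw [hcard] at h1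
  nlinarith

/-- A matrix with linearly independent rows has an invertible square submatrix. -/
lemma exists_invertible_submatrix_s9 {K : Type*} [Field K] {k n : ℕ}
    (g : Fin k → Fin n → K) (hg : LinearIndependent K g) :
    ∃ σ : Fin k → Fin n, Function.Injective σ ∧
      IsUnit (Matrix.of fun i j => g i (σ j) : Matrix (Fin k) (Fin k) K) := by
  classical
  set G : Matrix (Fin k) (Fin n) K := Matrix.of g with hG
  have hrank : G.rank = k := by
    have : LinearIndependent K (fun i => G i) := hg
    rw [this.rank_matrix, Fintype.card_fin]
  have hspan : Submodule.span K (Set.range Gᵀ) = ⊤ := by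
    apply Submodule.eq_top_of_finrank_eq
    rw [← show Set.range G.col = Set.range Gᵀ from rfl, ← Matrix.rank_eq_finrank_span_cols, hrank, Module.finrank_fintype_fun_eq_card,
      Fintype.card_fin]
  obtain ⟨b, hb_sub, hb_span, hb_li⟩ := exists_linearIndependent K (Set.range Gᵀ)
  rw [hspan] at hb_span
  have hb_fin : b.Finite := hb_li.finite
  haveI := hb_fin.fintype
  have hb_card : b.toFinset.card = k := by
    have := finrank_span_set_eq_card hb_li
    rw [hb_span, finrank_top, Module.finrank_fintype_fun_eq_card, Fintype.card_fin] at this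
    omega
  have hcard' : Fintype.card b = k := by rwa [Set.toFinset_card] at hb_card
  let e : Fin k ≃ b := (Fintype.equivFinOfCardEq hcard').symm
  have hchoice : ∀ x : b, ∃ t : Fin n, Gᵀ t = (x : Fin k → K) := fun x => hb_sub x.2
  choose σ0 hσ0 using hchoice
  refine ⟨fun i => σ0 (e i), ?_, ?_⟩
  · intro i j hij
    have : (e i : Fin k → K) = (e j : Fin k → K) := by
      simp only at hij
      rw [← hσ0 (e i), ← hσ0 (e j), hij]
    exact e.injective (Subtype.ext this)
  · rw [← Matrix.linearIndependent_cols_iff_isUnit]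
    have : (fun j => (Matrix.of fun i j => g i (σ0 (e j)) : Matrix (Fin k) (Fin k) K)ᵀ j)
        = fun j => ((e j : Fin k → K)) := by
      funext j
      rw [← hσ0 (e j)]
      rfl
    change LinearIndependent K (fun j => (Matrix.of fun i j => g i (σ0 (e j)) : Matrix (Fin k) (Fin k) K)ᵀ j)
    rw [this]
    exact hb_li.comp e e.injective

/-- There is some scaling vector making the Hermitian Gram determinant nonzero. -/
lemma exists_seed {K : Type*} [Field K] {k n : ℕ} (φ : K →+* K)
    (g : Fin k → Fin n → K) (hg : LinearIndependent K g) :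
    ∃ μ : Fin n → K,
      (Matrix.of fun i j => ∑ t, μ t * (g i t * φ (g j t)) : Matrix (Fin k) (Fin k) K).det ≠ 0 := by
  classical
  obtain ⟨σ, hσ, hP⟩ := exists_invertible_submatrix_s9 g hg
  set P : Matrix (Fin k) (Fin k) K := Matrix.of fun i j => g i (σ j) with hPdef
  refine ⟨fun t => if t ∈ Finset.image σ Finset.univ then 1 else 0, ?_⟩
  have hM : (Matrix.of fun i j =>
      ∑ t, (if t ∈ Finset.image σ Finset.univ then (1:K) else 0) * (g i t * φ (g j t))
      : Matrix (Fin k) (Fin k) K) = P * (P.map φ)ᵀ := by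
    ext i j
    simp only [Matrix.of_apply, Matrix.mul_apply, Matrix.transpose_apply, Matrix.map_apply,
      hPdef, ite_mul, one_mul, zero_mul]
    rw [Finset.sum_ite_mem, Finset.univ_inter, Finset.sum_image (fun a _ b _ h => hσ h)]
  have hmap : (P.map ⇑φ).det = φ P.det := by
    rw [← RingHom.mapMatrix_apply, ← RingHom.map_det]
  rw [hM, Matrix.det_mul, Matrix.det_transpose, hmap]
  have hPd : P.det ≠ 0 := ((Matrix.isUnit_iff_isUnit_det P).mp hP).ne_zero
  exact mul_ne_zero hPd (fun h => hPd (φ.injective (by rw [h, map_zero])))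

/-- Let `q > 2` be a prime power and `C` an `[n,k,d]` linear code over
`F_{q²}`.  Then there exists `a ∈ F_{q²}^n` with all `a_j ≠ 0` such that `C_a`
is a Hermitian LCD code; hence `C` is equivalent to a Hermitian LCD code. -/
theorem exists_equivalent_hermitian_lcd
    (q : ℕ) (hq : ∃ p m : ℕ, p.Prime ∧ 0 < m ∧ q = p ^ m) (hq2 : 2 < q)
    {F : Type*} [Field F] [Fintype F] [DecidableEq F] (hcard : Fintype.card F = q ^ 2)
    {n k d : ℕ}
    (C : Submodule F (Fin n → F))
    (hdim : Module.finrank F C = k) (hd : minDist C = d) :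
    ∃ a : Fin n → F, (∀ j : Fin n, a j ≠ 0) ∧
      (Submodule.map (scaleMap a) C) ⊓ hdualCode q (Submodule.map (scaleMap a) C) = ⊥ := by
  classical
  obtain ⟨p, m, hp, hm, hqpm⟩ := hq
  haveI : Fact p.Prime := ⟨hp⟩
  -- characteristic
  haveI hrc : CharP F (ringChar F) := ringChar.charP F
  obtain ⟨n₀, hrprime, hcF⟩ := FiniteField.card F (ringChar F)
  have hpr : p = ringChar F := by
    have hdvd : p ∣ (ringChar F) ^ (n₀ : ℕ) := by
      rw [← hcF, hcard, hqpm]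
      exact dvd_pow (dvd_pow_self p hm.ne') two_ne_zero
    exact (Nat.prime_dvd_prime_iff_eq hp hrprime).mp (hp.dvd_of_dvd_pow hdvd)
  haveI : CharP F p := by rw [hpr]; exact hrc
  -- Frobenius
  let φ : F →+* F := iterateFrobenius F p m
  have hφ : ∀ x : F, φ x = x ^ q := fun x => by
    rw [iterateFrobenius_def, hqpm]
  -- basis of C
  set k' := Module.finrank F C with hk'
  let bC : Module.Basis (Fin k') F C := Module.finBasis F C
  let g : Fin k' → (Fin n → F) := fun i => (bC i : Fin n → F)
  have hg_li : LinearIndependent F g :=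
    (bC.linearIndependent).map' C.subtype (Submodule.ker_subtype C)
  have hg_mem : ∀ i, g i ∈ C := fun i => (bC i).2
  have hg_span : Submodule.span F (Set.range g) = C := by
    have h1 : Set.range g = C.subtype '' Set.range bC := by
      rw [← Set.range_comp]; rfl
    rw [h1, ← Submodule.map_span, bC.span_eq, Submodule.map_top, Submodule.range_subtype]
  -- the set of nonzero norms
  obtain ⟨c0, hc00, hc01⟩ := exists_pow_ne_one q hq2 hcard
  set S : Finset F :=
    Finset.image (fun a : F => a ^ (q + 1)) (Finset.univ.filter (fun a : F => a ≠ 0)) with hSdef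
  have hS : 1 < S.card := by
    apply Finset.one_lt_card.mpr
    refine ⟨1, ?_, c0 ^ (q + 1), ?_, ?_⟩
    · exact Finset.mem_image.mpr ⟨1, by simp, one_pow _⟩
    · exact Finset.mem_image.mpr ⟨c0, by simp [hc00], rfl⟩
    · exact fun h => hc01 h.symm
  -- choose the scaling
  obtain ⟨μ, hμ⟩ := exists_seed φ g hg_li
  obtain ⟨lam, hlamS, hlam⟩ :=
    exists_scaling_det_ne_zero (fun t i => g i t) (fun t j => φ (g j t)) S hS μ hμ
  have hlam' : ∀ t, ∃ x ∈ Finset.univ.filter (fun a : F => a ≠ 0), x ^ (q + 1) = lam t :=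
    fun t => Finset.mem_image.mp (hlamS t)
  choose a hafil hapow using hlam'
  have ha0 : ∀ t, a t ≠ 0 := fun t => (Finset.mem_filter.mp (hafil t)).2
  refine ⟨a, ha0, ?_⟩
  -- the Gram matrix
  set Mlam : Matrix (Fin k') (Fin k') F :=
    Matrix.of fun i j => ∑ t, lam t * (g i t * φ (g j t)) with hMlam
  have hsc : ∀ (x : Fin n → F) (t : Fin n), scaleMap a x t = a t * x t := by
    intro x t
    simp [scaleMap]
  rw [eq_bot_iff]
  rintro x hx
  rw [Submodule.mem_inf] at hx
  obtain ⟨hx1, hx2⟩ := hx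
  obtain ⟨c, hcC, rfl⟩ := hx1
  have hcsp : c ∈ Submodule.span F (Set.range g) := hg_span ▸ hcC
  obtain ⟨y, hy⟩ := (Submodule.mem_span_range_iff_exists_fun F).mp hcsp
  have hx2' : ∀ z ∈ Submodule.map (scaleMap a) C,
      (scaleMap a c) ⬝ᵥ (fun i => z i ^ q) = 0 := hx2
  have hct : ∀ t, c t = ∑ i, y i * g i t := by
    intro t
    rw [← hy]
    simp [Finset.sum_apply]
  have hvec : Matrix.vecMul y Mlam = 0 := by
    funext j
    have hz := hx2' (scaleMap a (g j)) (Submodule.mem_map_of_mem (hg_mem j))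
    have hz' : ∑ t, (a t * c t) * ((a t * g j t) ^ q) = 0 := by
      simpa [dotProduct, hsc] using hz
    show Matrix.vecMul y Mlam j = (0 : Fin k' → F) j
    calc Matrix.vecMul y Mlam j
        = ∑ i, y i * ∑ t, lam t * (g i t * φ (g j t)) := by
          simp [Matrix.vecMul, dotProduct, hMlam]
      _ = ∑ i, ∑ t, y i * (lam t * (g i t * φ (g j t))) := by
          simp [Finset.mul_sum]
      _ = ∑ t, ∑ i, y i * (lam t * (g i t * φ (g j t))) := Finset.sum_comm
      _ = ∑ t, (a t * c t) * ((a t * g j t) ^ q) := by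
          refine Finset.sum_congr rfl fun t _ => ?_
          rw [hct t, Finset.mul_sum, Finset.sum_mul]
          refine Finset.sum_congr rfl fun i _ => ?_
          rw [hφ, ← hapow t, mul_pow, pow_succ]
          ring
      _ = 0 := hz'
      _ = (0 : Fin k' → F) j := rfl
  have hy0 : y = 0 := by
    have hU : IsUnit Mlam := (Matrix.isUnit_iff_isUnit_det _).mpr (Ne.isUnit hlam)
    have hinj := Matrix.vecMul_injective_iff_isUnit.mpr hU
    apply hinj
    show Matrix.vecMul y Mlam = Matrix.vecMul 0 Mlam
    rw [hvec, Matrix.zero_vecMul]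
  have hc0 : c = 0 := by
    rw [← hy, hy0]
    simp
  rw [Submodule.mem_bot, hc0, map_zero]
end

section
/- Let q be a prime power with q > 2. If there exists an [n,k,d] linear code over F_{q²}, then there exists an [n,k,d] linear code over F_{q²} that is a Hermitian LCD code. -/
open Matrix

section Aux
variable {F : Type*} [Field F]

/-- Functional Schwartz–Zippel for coordinatewise-affine functions. -/
lemma aux_sz {n : ℕ} {u v : F} (huv : u ≠ v) (f : (Fin n → F) → F)
    (haff : ∀ (i : Fin n) (e : Fin n → F), ∃ α β : F,
      ∀ t, f (Function.update e i t) = α + t * β)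
    (hzero : ∀ e : Fin n → F, (∀ i, e i = u ∨ e i = v) → f e = 0) :
    ∀ e, f e = 0 := by
  suffices h : ∀ s : Finset (Fin n), ∀ e : Fin n → F,
      (∀ i, i ∉ s → e i = u ∨ e i = v) → f e = 0 by
    intro e
    exact h Finset.univ e (fun i hi => absurd (Finset.mem_univ i) hi)
  intro s
  induction s using Finset.induction with
  | empty => intro e he; exact hzero e fun i => he i (Finset.notMem_empty i)
  | @insert a s ha ih =>
    intro e he
    obtain ⟨α, β, hαβ⟩ := haff a e
    have key : ∀ t : F, (t = u ∨ t = v) → α + t * β = 0 := by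
      intro t ht
      rw [← hαβ t]
      refine ih _ fun i hi => ?_
      rcases eq_or_ne i a with rfl | hia
      · rwa [Function.update_self]
      · rw [Function.update_of_ne hia]
        exact he i (by simp [hi, hia])
    have hu := key u (Or.inl rfl)
    have hv := key v (Or.inr rfl)
    have hβ : β = 0 := by
      have : (u - v) * β = 0 := by ring_nf; linear_combination hu - hv
      rcases mul_eq_zero.mp this with h | h
      · exact absurd (sub_eq_zero.mp h) huv
      · exact h
    have hα : α = 0 := by simpa [hβ] using hu
    have := hαβ (e a)
    rwa [Function.update_eq_self, hα, hβ, mul_zero, add_zero] at this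

/-- determinant of a rank-one perturbation is affine in the scalar. -/
lemma aux_det_affine {k : ℕ} (A : Matrix (Fin k) (Fin k) F) (u w : Fin k → F) :
    ∃ α β : F, ∀ t : F,
      (Matrix.of fun j l => A j l + t * (u j * w l)).det = α + t * β := by
  classical
  set B : Matrix (Fin k) Unit F := Matrix.of fun j (_ : Unit) => u j with hB
  set Ct : F → Matrix Unit (Fin k) F := fun t => Matrix.of fun (_ : Unit) l => -t * w l with hCt
  set N : F → Matrix (Fin k ⊕ Unit) (Fin k ⊕ Unit) F :=
    fun t => Matrix.fromBlocks A B (Ct t) 1 with hN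
  have key : ∀ t, (Matrix.of fun j l => A j l + t * (u j * w l)).det = (N t).det := by
    intro t
    rw [hN]
    rw [Matrix.det_fromBlocks_one₂₂]
    congr 1
    ext j l
    simp [hB, hCt, Matrix.mul_apply, Matrix.sub_apply]
    ring
  have hrow : ∀ t, N t = Matrix.updateRow (N 0) (Sum.inr ())
      (Sum.elim (0 : Fin k → F) (1 : Unit → F) + t • Sum.elim (-w) (0 : Unit → F)) := by
    intro t
    ext i j
    rcases i with i | i
    · rw [Matrix.updateRow_ne (by simp)]
      rcases j with j | j <;> simp [hN]
    · rcases i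
      rw [Matrix.updateRow_self]
      rcases j with j | j <;> simp [hN, hCt] <;> ring
  refine ⟨((N 0).updateRow (Sum.inr ()) (Sum.elim (0 : Fin k → F) (1 : Unit → F))).det,
    ((N 0).updateRow (Sum.inr ()) (Sum.elim (-w) (0 : Unit → F))).det, fun t => ?_⟩
  rw [key, hrow, Matrix.det_updateRow_add, Matrix.det_updateRow_smul]
end Aux

section Aux2
variable {F : Type*} [Field F] [Fintype F] [DecidableEq F]

lemma aux_submatrix {k n : ℕ} (B : Matrix (Fin k) (Fin n) F)
    (hB : LinearIndependent F (fun j => B j)) :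
    ∃ s : Fin k → Fin n, Function.Injective s ∧ (B.submatrix id s).det ≠ 0 := by
  classical
  have hrk : B.rank = k := by
    have h1 : Bᵀ.rank = k := by
      rw [Matrix.rank_eq_finrank_span_cols, show Set.range Bᵀ.col = Set.range (fun j => B j) from rfl]
      simpa using finrank_span_eq_card hB
    rw [← Matrix.rank_transpose, h1]
  have hspan : Submodule.span F (Set.range Bᵀ) = ⊤ := by
    apply Submodule.eq_top_of_finrank_eq
    rw [show Set.range Bᵀ = Set.range B.col from rfl, ← Matrix.rank_eq_finrank_span_cols, hrk]
    simp [Module.finrank_pi]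
  obtain ⟨bs, hsub, hspan2, hind⟩ := exists_linearIndependent F (Set.range Bᵀ)
  rw [hspan] at hspan2
  haveI : Fintype bs := bs.toFinite.fintype
  let bas : Module.Basis bs F (Fin k → F) := Module.Basis.mk hind (by rw [Subtype.range_coe, hspan2])
  have hcard : Fintype.card bs = k := by
    have := Module.finrank_eq_card_basis bas
    simpa [Module.finrank_pi] using this.symm
  let eqv : Fin k ≃ bs := (Fintype.equivFinOfCardEq hcard).symm
  have hchoose : ∀ r : Fin k, ∃ i : Fin n, Bᵀ i = (eqv r : Fin k → F) :=
    fun r => hsub (eqv r).2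
  choose s hs using hchoose
  have hinj : Function.Injective s := by
    intro r1 r2 h
    have : (eqv r1 : Fin k → F) = eqv r2 := by rw [← hs r1, ← hs r2, h]
    exact eqv.injective (Subtype.coe_injective this)
  refine ⟨s, hinj, ?_⟩
  have hcols : (fun r => (B.submatrix id s)ᵀ r) = fun r => (eqv r : Fin k → F) := by
    funext r
    ext j
    simpa [Matrix.submatrix, Matrix.transpose] using congrFun (hs r) j
  have : IsUnit (B.submatrix id s) := by
    rw [← Matrix.linearIndependent_cols_iff_isUnit, show (B.submatrix id s).col = fun r => (B.submatrix id s)ᵀ r from rfl, hcols]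
    exact hind.comp eqv eqv.injective
  exact ((Matrix.isUnit_iff_isUnit_det _).mp this).ne_zero
end Aux2

section Aux3
variable {F : Type*} [Field F] [Fintype F] [DecidableEq F]

lemma exists_good_diag (conj : F →+* F) {a : F} (ha1 : a ≠ 1)
    {n : ℕ} (C : Submodule F (Fin n → F)) :
    ∃ e : Fin n → F, (∀ i, e i = 1 ∨ e i = a) ∧
      ∀ c ∈ C, c ≠ 0 → ∃ c₂ ∈ C,
        (∑ i, e i * (c i * conj (c₂ i))) ≠ 0 := by
  classical
  set k' := Module.finrank F C with hk'
  let b : Module.Basis (Fin k') F C := Module.finBasis F C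
  let bv : Fin k' → (Fin n → F) := fun j => (b j : Fin n → F)
  have hbvC : ∀ j, bv j ∈ C := fun j => (b j).2
  have hli : LinearIndependent F bv := by
    have := b.linearIndependent.map' C.subtype (Submodule.ker_subtype C)
    exact this
  set G : (Fin n → F) → Matrix (Fin k') (Fin k') F :=
    fun e => Matrix.of fun j l => ∑ i, e i * (bv j i * conj (bv l i)) with hG
  -- affineness
  have haff : ∀ (i : Fin n) (e : Fin n → F), ∃ α β : F,
      ∀ t, (G (Function.update e i t)).det = α + t * β := by
    intro i0 e
    obtain ⟨α, β, hab⟩ := aux_det_affine (G (Function.update e i0 0))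
      (fun j => bv j i0) (fun l => conj (bv l i0))
    refine ⟨α, β, fun t => ?_⟩
    rw [← hab t]
    congr 1
    ext j l
    show (∑ i, Function.update e i0 t i * (bv j i * conj (bv l i)))
      = (∑ i, Function.update e i0 0 i * (bv j i * conj (bv l i)))
        + t * (bv j i0 * conj (bv l i0))
    rw [← Finset.add_sum_erase _ _ (Finset.mem_univ i0),
        ← Finset.add_sum_erase _ _ (Finset.mem_univ i0)]
    have hsame : ∀ i ∈ Finset.univ.erase i0,
        Function.update e i0 t i * (bv j i * conj (bv l i))
          = Function.update e i0 0 i * (bv j i * conj (bv l i)) := by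
      intro i hi
      rw [Function.update_of_ne (Finset.ne_of_mem_erase hi),
          Function.update_of_ne (Finset.ne_of_mem_erase hi)]
    rw [Finset.sum_congr rfl hsame]
    simp
    ring
  -- seed
  have hseed : ∃ e : Fin n → F, (G e).det ≠ 0 := by
    set B : Matrix (Fin k') (Fin n) F := Matrix.of fun j i => bv j i with hBdef
    obtain ⟨s, hsinj, hsdet⟩ := aux_submatrix B hli
    set e0 : Fin n → F := fun i => if i ∈ Finset.image s Finset.univ then 1 else 0 with he0
    refine ⟨e0, ?_⟩
    have hGe0 : G e0 = (B.submatrix id s) * ((B.submatrix id s).map conj)ᵀ := by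
      ext j l
      show (∑ i, e0 i * (bv j i * conj (bv l i))) = _
      rw [Matrix.mul_apply]
      rw [show (∑ i, e0 i * (bv j i * conj (bv l i)))
        = ∑ i ∈ Finset.image s Finset.univ, bv j i * conj (bv l i) from ?_]
      · rw [Finset.sum_image (fun x _ y _ h => hsinj h)]
        apply Finset.sum_congr rfl
        intro r _
        simp [hBdef, Matrix.submatrix, Matrix.map, Matrix.transpose]
      · rw [← Finset.sum_filter_add_sum_filter_not Finset.univ
          (fun i => i ∈ Finset.image s Finset.univ)]
        have h2 : ∀ i ∈ Finset.univ.filter (fun i => i ∉ Finset.image s Finset.univ),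
            e0 i * (bv j i * conj (bv l i)) = 0 := by
          intro i hi
          simp only [Finset.mem_filter] at hi
          have : e0 i = 0 := if_neg hi.2
          rw [this, zero_mul]
        rw [Finset.sum_congr rfl h2, Finset.sum_const_zero, add_zero,
          Finset.filter_mem_eq_inter, Finset.univ_inter]
        apply Finset.sum_congr rfl
        intro i hi
        have : e0 i = 1 := if_pos hi
        rw [this, one_mul]
    rw [hGe0, Matrix.det_mul, Matrix.det_transpose]
    have hmap : ((B.submatrix id s).map conj).det = conj (B.submatrix id s).det := by
      rw [conj.map_det, RingHom.mapMatrix_apply]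
    rw [hmap]
    exact mul_ne_zero hsdet (fun h => hsdet (conj.injective (by simpa using h)))
  -- combine: get good e with nonzero det
  have hgood : ∃ e : Fin n → F, (∀ i, e i = 1 ∨ e i = a) ∧ (G e).det ≠ 0 := by
    by_contra hcon
    push_neg at hcon
    obtain ⟨e1, he1⟩ := hseed
    exact he1 (aux_sz (fun h => ha1 h.symm) (fun e => (G e).det) haff
      (fun e he => hcon e he) e1)
  obtain ⟨e, he, hdet⟩ := hgood
  refine ⟨e, he, fun c hc hc0 => ?_⟩
  by_contra hcon
  push_neg at hcon
  -- representation of c in the basis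
  set x : Fin k' → F := fun j => b.repr ⟨c, hc⟩ j with hx
  have hcrep : ∀ i, c i = ∑ j, x j * bv j i := by
    intro i
    have h1 : (∑ j, x j • b j) = (⟨c, hc⟩ : C) := b.sum_repr ⟨c, hc⟩
    have h2 := congrArg (fun z : C => (z : Fin n → F) i) h1
    simpa [Submodule.coe_sum, Finset.sum_apply, bv] using h2.symm
  have hvm : x ᵥ* (G e) = 0 := by
    funext l
    show ∑ j, x j * (G e) j l = 0
    have : ∑ j, x j * (G e) j l = ∑ i, e i * (c i * conj (bv l i)) := by
      show (∑ j, x j * ∑ i, e i * (bv j i * conj (bv l i))) = _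
      simp_rw [Finset.mul_sum]
      rw [Finset.sum_comm]
      apply Finset.sum_congr rfl
      intro i _
      rw [hcrep i]
      simp only [Finset.sum_mul, Finset.mul_sum]
      apply Finset.sum_congr rfl
      intro j _
      ring
    rw [this]
    exact hcon (bv l) (hbvC l)
  have hxz : x = 0 := by
    have hinj : Function.Injective (fun v => v ᵥ* (G e)) :=
      Matrix.vecMul_injective_iff_isUnit.mpr ((Matrix.isUnit_iff_isUnit_det _).mpr
        (isUnit_iff_ne_zero.mpr hdet))
    have : x ᵥ* (G e) = (0 : Fin k' → F) ᵥ* (G e) := by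
      rw [hvm, Matrix.zero_vecMul]
    exact hinj this
  apply hc0
  funext i
  rw [hcrep i]
  simp [hxz]
end Aux3

/-- Let `q > 2` be a prime power.  If an `[n,k,d]` linear code over `F_{q²}`
exists, then an `[n,k,d]` Hermitian LCD linear code over `F_{q²}` exists. -/
theorem exists_hermitian_lcd_code_of_exists_code
    (q : ℕ) (hq : ∃ p m : ℕ, p.Prime ∧ 0 < m ∧ q = p ^ m) (hq2 : 2 < q)
    {F : Type*} [Field F] [Fintype F] [DecidableEq F] (hcard : Fintype.card F = q ^ 2)
    {n k d : ℕ}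
    (h : ∃ C : Submodule F (Fin n → F), Module.finrank F C = k ∧ minDist C = d) :
    ∃ C : Submodule F (Fin n → F), Module.finrank F C = k ∧ minDist C = d ∧
      C ⊓ hdualCode q C = ⊥ := by
  classical
  obtain ⟨C, hk, hd⟩ := h
  obtain ⟨p, m, hp, hm, hqpm⟩ := hq
  -- characteristic
  obtain ⟨np, hpr, hnp⟩ := FiniteField.card F (ringChar F)
  have hreq : ringChar F = p := by
    have hdvd : ringChar F ∣ p ^ (2 * m) := by
      have : (ringChar F) ^ (np : ℕ) = p ^ (2 * m) := by
        rw [← hnp, hcard, hqpm, ← pow_mul, Nat.mul_comm]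
      calc ringChar F ∣ (ringChar F) ^ (np : ℕ) := dvd_pow_self _ np.ne_zero
        _ = p ^ (2 * m) := this
    have := hpr.dvd_of_dvd_pow hdvd
    exact (Nat.prime_dvd_prime_iff_eq hpr hp).mp this
  haveI hcharp : CharP F p := hreq ▸ ringChar.charP F
  haveI : ExpChar F p := ExpChar.prime hp
  set conj : F →+* F := iterateFrobenius F p m with hconjdef
  have hconj : ∀ x : F, conj x = x ^ q := by
    intro x
    rw [hconjdef, iterateFrobenius_def, hqpm]
  -- a generator and the element a
  obtain ⟨g, hg⟩ := IsCyclic.exists_generator (α := Fˣ)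
  have horder : orderOf g = q ^ 2 - 1 := by
    rw [orderOf_eq_card_of_forall_mem_zpowers hg, Nat.card_eq_fintype_card,
      Fintype.card_units, hcard]
  set a : F := ((g ^ (q + 1) : Fˣ) : F) with hadef
  have ha1 : a ≠ 1 := by
    intro hcontra
    have h1 : (g ^ (q + 1) : Fˣ) = 1 := Units.ext (by simpa [hadef] using hcontra)
    have h2 : orderOf g ∣ q + 1 := orderOf_dvd_of_pow_eq_one h1
    have h3 : q ^ 2 - 1 ≤ q + 1 := horder ▸ Nat.le_of_dvd (by omega) h2
    have h4 : q * q = q ^ 2 := (sq q).symm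
    have h5 : 3 * q ≤ q * q := Nat.mul_le_mul_right q (by omega)
    omega
  -- the good diagonal
  obtain ⟨e, he, hnd⟩ := exists_good_diag conj ha1 C
  set l : Fin n → F := fun i => if e i = 1 then 1 else (g : F) with hldef
  have hl0 : ∀ i, l i ≠ 0 := by
    intro i
    rw [hldef]
    dsimp only
    split
    · exact one_ne_zero
    · exact Units.ne_zero g
  have hle : ∀ i, l i * (l i) ^ q = e i := by
    intro i
    rw [hldef]
    dsimp only
    by_cases h1 : e i = 1
    · rw [if_pos h1, h1, one_pow, one_mul]
    · rw [if_neg h1]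
      have hea : e i = a := (he i).resolve_left h1
      rw [hea, hadef]
      push_cast
      rw [← pow_succ' (g : F) q]
  -- the scaling equivalence
  set E : (Fin n → F) ≃ₗ[F] (Fin n → F) :=
    LinearEquiv.piCongrRight (fun i => LinearEquiv.smulOfNeZero F F (l i) (hl0 i)) with hEdef
  have hE : ∀ (x : Fin n → F) (i : Fin n), E x i = l i * x i := by
    intro x i
    rw [hEdef]
    simp [LinearEquiv.smulOfNeZero, LinearEquiv.smulOfUnit, smul_eq_mul]
  set C' : Submodule F (Fin n → F) := Submodule.map (E : (Fin n → F) →ₗ[F] (Fin n → F)) C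
    with hC'def
  have hmem' : ∀ y, y ∈ C' ↔ ∃ c ∈ C, E c = y := by
    intro y
    rw [hC'def, Submodule.mem_map]
    constructor
    · rintro ⟨c, hc, rfl⟩; exact ⟨c, hc, rfl⟩
    · rintro ⟨c, hc, rfl⟩; exact ⟨c, hc, rfl⟩
  refine ⟨C', ?_, ?_, ?_⟩
  · rw [hC'def, LinearEquiv.finrank_map_eq E C, hk]
  · -- min distance
    rw [← hd]
    have hnorm : ∀ x : Fin n → F, hammingNorm (E x) = hammingNorm x := by
      intro x
      unfold hammingNorm
      congr 1
      apply Finset.filter_congr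
      intro i _
      rw [hE]
      simp [hl0 i, mul_eq_zero]
    unfold minDist
    congr 1
    ext w
    simp only [Set.mem_setOf_eq]
    constructor
    · rintro ⟨c', hc', hne, hw⟩
      obtain ⟨c, hc, rfl⟩ := (hmem' c').mp hc'
      refine ⟨c, hc, fun h => hne (by rw [h, map_zero]), by rw [← hnorm c]; exact hw⟩
    · rintro ⟨c, hc, hne, hw⟩
      refine ⟨E c, (hmem' _).mpr ⟨c, hc, rfl⟩,
        fun h => hne ((LinearEquiv.map_eq_zero_iff E).mp h), by rw [hnorm c]; exact hw⟩
  · -- LCD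
    rw [Submodule.eq_bot_iff]
    intro x hx
    rw [Submodule.mem_inf] at hx
    obtain ⟨hx1, hx2⟩ := hx
    obtain ⟨c, hc, hcx⟩ := (hmem' x).mp hx1
    suffices hcz : c = 0 by rw [← hcx, hcz, map_zero]
    by_contra hc0
    obtain ⟨c₂, hc₂, hs⟩ := hnd c hc hc0
    apply hs
    have hdual := hx2 (E c₂) ((hmem' (E c₂)).mpr ⟨c₂, hc₂, rfl⟩)
    rw [← hcx] at hdual
    calc ∑ i, e i * (c i * conj (c₂ i))
        = ∑ i, (E c) i * ((E c₂) i) ^ q := by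
          apply Finset.sum_congr rfl
          intro i _
          rw [hE, hE, hconj, mul_pow]
          rw [← hle i]
          ring
      _ = (E c) ⬝ᵥ (fun i => ((E c₂) i) ^ q) := rfl
      _ = 0 := hdual
end

section
/- Let q be a prime power and let C be an [n,k] linear code over F_q with h := h_E(C) > 0. Let c¹,…,c^k be a basis of C such that c¹,…,c^h is a basis of the Euclidean hull Hull_E(C). Then the subspace Span{c^{h+1}, c^{h+2}, …, c^k} is an Euclidean LCD code. -/
open Matrix

/-- Let `C` be an `[n,k]` linear code over `F_q` whose Euclidean hull
`Hull_E(C) = C ⊓ C^⊥` has dimension `h > 0`.  If `c 0, …, c (k-1)` is a basis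
of `C` whose first `h` vectors form a basis of `Hull_E(C)`, then the span of
the remaining vectors `c h, …, c (k-1)` is an Euclidean LCD code. -/
theorem span_complement_of_hull_is_lcd
    (q : ℕ) (hq : ∃ p m : ℕ, p.Prime ∧ 0 < m ∧ q = p ^ m)
    {F : Type*} [Field F] [Fintype F] (hcard : Fintype.card F = q)
    {n k : ℕ}
    (C : Submodule F (Fin n → F)) (hdim : Module.finrank F C = k)
    (h : ℕ) (hh : h = Module.finrank F ↥(C ⊓ dualCode C)) (hpos : 0 < h)
    (c : Fin k → (Fin n → F))
    (hindep : LinearIndependent F c)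
    (hspan : Submodule.span F (Set.range c) = C)
    (hhull : Submodule.span F (c '' {i : Fin k | (i : ℕ) < h}) = C ⊓ dualCode C) :
    Submodule.span F (c '' {i : Fin k | h ≤ (i : ℕ)}) ⊓
      dualCode (Submodule.span F (c '' {i : Fin k | h ≤ (i : ℕ)})) = ⊥ := by
  set D := Submodule.span F (c '' {i : Fin k | h ≤ (i : ℕ)}) with hD
  rw [Submodule.eq_bot_iff]
  rintro x ⟨hxD, hxD'⟩
  have hDC : D ≤ C := by
    rw [← hspan]
    exact Submodule.span_mono (Set.image_subset_range c _)
  have hxC : x ∈ C := hDC hxD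
  have hsup : Submodule.span F (c '' {i : Fin k | (i : ℕ) < h}) ⊔ D = C := by
    rw [hD, ← Submodule.span_union, ← Set.image_union, ← hspan]
    congr 1
    rw [← Set.image_univ]
    congr 1
    ext i
    simp [lt_or_ge]
  -- show x ∈ dualCode C
  have hxdual : x ∈ dualCode C := by
    intro y hy
    rw [← hsup] at hy
    obtain ⟨y₁, hy₁, y₂, hy₂, rfl⟩ := Submodule.mem_sup.mp hy
    have hy₁hull : y₁ ∈ C ⊓ dualCode C := hhull ▸ hy₁
    have h1 : x ⬝ᵥ y₁ = 0 := by
      rw [dotProduct_comm]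
      exact hy₁hull.2 x hxC
    have h2 : x ⬝ᵥ y₂ = 0 := hxD' y₂ hy₂
    simp [dotProduct_add, h1, h2]
  have hxhull : x ∈ Submodule.span F (c '' {i : Fin k | (i : ℕ) < h}) := by
    rw [hhull]; exact ⟨hxC, hxdual⟩
  have hdisj : Disjoint (Submodule.span F (c '' {i : Fin k | (i : ℕ) < h})) D := by
    apply hindep.disjoint_span_image
    rw [Set.disjoint_iff]
    rintro i ⟨hi1, hi2⟩
    exact absurd (Set.mem_setOf.mp hi1) (not_lt.mpr (Set.mem_setOf.mp hi2))
  exact (Submodule.disjoint_def.mp hdisj) x hxhull hxD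
end

section
/- Let q be a prime power. If there exists an [n,k,d] linear code C over F_q with h := h_E(C) > 0, then there exists an Euclidean LCD linear code over F_q of length n+h, dimension k, and minimum distance at least d. -/
open Matrix

lemma append_dot {F : Type*} [Field F] {n h : ℕ} (a c : Fin n → F) (b e : Fin h → F) :
    Fin.append a b ⬝ᵥ Fin.append c e = a ⬝ᵥ c + b ⬝ᵥ e := by
  simp only [dotProduct, Fin.sum_univ_add, Fin.append_left, Fin.append_right]

/-- If there is an `[n,k,d]` linear code `C` over `F_q` whose Euclidean hull
has dimension `h > 0`, then there is an Euclidean LCD linear code over `F_q`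
of length `n + h`, dimension `k`, and minimum distance at least `d`. -/
theorem exists_lcd_code_of_code_with_hull
    (q : ℕ) (hq : ∃ p m : ℕ, p.Prime ∧ 0 < m ∧ q = p ^ m)
    {F : Type*} [Field F] [Fintype F] [DecidableEq F] (hcard : Fintype.card F = q)
    {n k d : ℕ}
    (C : Submodule F (Fin n → F))
    (hdim : Module.finrank F C = k) (hd : minDist C = d)
    (h : ℕ) (hh : h = Module.finrank F ↥(C ⊓ dualCode C)) (hpos : 0 < h) :
    ∃ D : Submodule F (Fin (n + h) → F),
      Module.finrank F D = k ∧ d ≤ minDist D ∧ D ⊓ dualCode D = ⊥ := by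
  classical
  haveI : FiniteDimensional F ↥C := FiniteDimensional.finiteDimensional_submodule C
  -- the hull, viewed inside `↥C`
  set H' : Submodule F ↥C := Submodule.comap C.subtype (C ⊓ dualCode C) with hH'
  have hle : C ⊓ dualCode C ≤ C := inf_le_left
  have hrank : Module.finrank F H' = h := by
    rw [hh]
    exact LinearEquiv.finrank_eq (Submodule.comapSubtypeEquivOfLe hle)
  haveI : Module.Free F ↥H' := Module.Free.of_divisionRing F ↥H'
  haveI : Module.Finite F ↥H' := FiniteDimensional.finiteDimensional_submodule H'
  obtain ⟨W, hWc⟩ := Submodule.exists_isCompl H'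
  let π : ↥C →ₗ[F] ↥H' := H'.projectionOnto W hWc
  let b : Module.Basis (Fin h) F ↥H' := Module.finBasisOfFinrankEq F ↥H' hrank
  let e : ↥H' ≃ₗ[F] (Fin h → F) := b.equivFun
  let ψ : ↥C →ₗ[F] (Fin h → F) := e.toLinearMap ∘ₗ π
  -- the embedding `c ↦ (c, ψ c)`
  let φ : ↥C →ₗ[F] (Fin (n + h) → F) :=
    { toFun := fun c => Fin.append (c : Fin n → F) (ψ c)
      map_add' := by
        intro a b'
        funext i
        refine Fin.addCases (fun i => ?_) (fun i => ?_) i <;>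
          simp [Fin.append_left, Fin.append_right]
      map_smul' := by
        intro r a
        funext i
        refine Fin.addCases (fun i => ?_) (fun i => ?_) i <;>
          simp [Fin.append_left, Fin.append_right] }
  have hφapp : ∀ c : ↥C, φ c = Fin.append (c : Fin n → F) (ψ c) := fun _ => rfl
  have hφinj : Function.Injective φ := by
    intro a b' hab
    ext i
    have := congrFun hab (Fin.castAdd h i)
    simpa [hφapp, Fin.append_left] using this
  refine ⟨LinearMap.range φ, ?_, ?_, ?_⟩
  · rw [LinearMap.finrank_range_of_inj hφinj, hdim]
  · -- minimum distance does not decrease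
    have hCne : ∃ c0 : ↥C, c0 ≠ 0 := by
      have h1 : 0 < Module.finrank F H' := hrank ▸ hpos
      have h2 : Nontrivial H' := Module.nontrivial_of_finrank_pos h1
      obtain ⟨⟨x, hx⟩, hxne⟩ := exists_ne (0 : H')
      refine ⟨x, fun hx0 => hxne (Subtype.ext ?_)⟩
      simpa using hx0
    obtain ⟨c0, hc0ne⟩ := hCne
    have hSne : Set.Nonempty {w | ∃ c ∈ LinearMap.range φ, c ≠ 0 ∧ hammingNorm c = w} := by
      refine ⟨hammingNorm (φ c0), φ c0, ⟨c0, rfl⟩, ?_, rfl⟩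
      intro h0
      exact hc0ne (hφinj (by simpa using h0))
    refine le_csInf hSne ?_
    rintro w ⟨x, ⟨c, rfl⟩, hxne, rfl⟩
    have hcne : c ≠ 0 := fun hc => hxne (by simp [hc])
    have hcne' : (c : Fin n → F) ≠ 0 := fun hc => hcne (Subtype.ext hc)
    have h1 : minDist C ≤ hammingNorm (c : Fin n → F) :=
      Nat.sInf_le ⟨(c : Fin n → F), c.2, hcne', rfl⟩
    have h2 : hammingNorm (c : Fin n → F) ≤ hammingNorm (φ c) := by
      simp only [hammingNorm, hφapp]
      apply Finset.card_le_card_of_injOn (fun i => Fin.castAdd h i)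
      · intro i hi
        simp only [Finset.mem_filter, Finset.mem_univ, true_and] at hi ⊢
        simpa [Fin.append_left] using hi
      · intro i _ j _ hij
        exact Fin.castAdd_injective _ _ hij
    rw [← hd]
    exact le_trans h1 h2
  · -- the new code is LCD
    rw [eq_bot_iff]
    rintro x ⟨hxr, hxd⟩
    obtain ⟨c, rfl⟩ := hxr
    have hxd' : ∀ y ∈ LinearMap.range φ, φ c ⬝ᵥ y = 0 := hxd
    have hdot : ∀ c' : ↥C,
        (c : Fin n → F) ⬝ᵥ (c' : Fin n → F) + ψ c ⬝ᵥ ψ c' = 0 := by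
      intro c'
      have := hxd' (φ c') ⟨c', rfl⟩
      rwa [hφapp, hφapp, append_dot] at this
    -- step 1 : ψ c = 0
    have hψc : ψ c = 0 := by
      have key : ∀ v : Fin h → F, ψ c ⬝ᵥ v = 0 := by
        intro v
        obtain ⟨x', rfl⟩ := e.surjective v
        have he : ψ ((x' : ↥C)) = e x' := by
          simp only [ψ, LinearMap.comp_apply, π,
            Submodule.projectionOnto_apply_left, LinearEquiv.coe_coe]
        have hdual : ((x' : ↥C) : Fin n → F) ∈ dualCode C :=
          (Submodule.mem_inf.mp x'.2).2
        have h0 : (c : Fin n → F) ⬝ᵥ ((x' : ↥C) : Fin n → F) = 0 := by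
          rw [dotProduct_comm]
          exact hdual (c : Fin n → F) c.2
        have := hdot (x' : ↥C)
        rwa [h0, he, zero_add] at this
      funext i
      have := key (Pi.single i 1)
      rwa [dotProduct_single, mul_one] at this
    -- step 2 : c ∈ W
    have hcW : c ∈ W := by
      have hπ : π c = 0 := by
        apply e.injective
        rw [show e 0 = 0 from e.toLinearMap.map_zero]
        exact hψc
      exact (Submodule.projectionOnto_apply_eq_zero_iff hWc).mp hπ
    -- step 3 : c ∈ H'
    have hcH : c ∈ H' := by
      have hcd : (c : Fin n → F) ∈ dualCode C := by
        intro cc hcc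
        have := hdot ⟨cc, hcc⟩
        rwa [hψc, zero_dotProduct, add_zero] at this
      exact Submodule.mem_comap.mpr (Submodule.mem_inf.mpr ⟨c.2, hcd⟩)
    have hc0 : c = 0 := by
      have : c ∈ H' ⊓ W := ⟨hcH, hcW⟩
      rwa [hWc.inf_eq_bot, Submodule.mem_bot] at this
    simp [hc0]
end

section
/- Let q be a prime power with q > 2. Then α_{q²}^H(δ) = α_{q²}^lin(δ) for every δ ∈ [0,1]; that is, the largest asymptotic information rate achievable by Hermitian LCD codes over F_{q²} at asymptotic relative minimum distance δ equals that achievable by arbitrary linear codes over F_{q²}. -/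
open Matrix Filter

/-- `ULin F` is the set of pairs `(δ, R) ∈ [0,1]²` for which there is a
sequence of `[nᵢ, kᵢ, dᵢ]` linear codes over `F` with `nᵢ → ∞`,
`dᵢ/nᵢ → δ` and `kᵢ/nᵢ → R`. -/
def ULin (F : Type*) [Field F] [Fintype F] [DecidableEq F] : Set (ℝ × ℝ) :=
  {p | p ∈ Set.Icc (0 : ℝ) 1 ×ˢ Set.Icc (0 : ℝ) 1 ∧
    ∃ (nn kk dd : ℕ → ℕ) (C : (i : ℕ) → Submodule F (Fin (nn i) → F)),
      (∀ i, Module.finrank F (C i) = kk i) ∧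
      (∀ i, minDist (C i) = dd i) ∧
      Tendsto nn atTop atTop ∧
      Tendsto (fun i => (dd i : ℝ) / (nn i : ℝ)) atTop (nhds p.1) ∧
      Tendsto (fun i => (kk i : ℝ) / (nn i : ℝ)) atTop (nhds p.2)}

/-- `UH q F` is the analogous set where all codes in the sequence are required
to be Hermitian LCD codes (conjugation being `x ↦ x ^ q` on `F = F_{q²}`). -/
def UH (q : ℕ) (F : Type*) [Field F] [Fintype F] [DecidableEq F] : Set (ℝ × ℝ) :=
  {p | p ∈ Set.Icc (0 : ℝ) 1 ×ˢ Set.Icc (0 : ℝ) 1 ∧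
    ∃ (nn kk dd : ℕ → ℕ) (C : (i : ℕ) → Submodule F (Fin (nn i) → F)),
      (∀ i, Module.finrank F (C i) = kk i) ∧
      (∀ i, minDist (C i) = dd i) ∧
      (∀ i, C i ⊓ hdualCode q (C i) = ⊥) ∧
      Tendsto nn atTop atTop ∧
      Tendsto (fun i => (dd i : ℝ) / (nn i : ℝ)) atTop (nhds p.1) ∧
      Tendsto (fun i => (kk i : ℝ) / (nn i : ℝ)) atTop (nhds p.2)}

/-- `α_{q²}^lin(δ)`: the largest asymptotic information rate of linear codes
over `F = F_{q²}` at asymptotic relative minimum distance `δ`. -/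
noncomputable def alphaLin (F : Type*) [Field F] [Fintype F] [DecidableEq F]
    (δ : ℝ) : ℝ :=
  sSup {R : ℝ | R ∈ Set.Icc (0 : ℝ) 1 ∧ (δ, R) ∈ ULin F}

/-- `α_{q²}^H(δ)`: the largest asymptotic information rate of Hermitian LCD
codes over `F = F_{q²}` at asymptotic relative minimum distance `δ`. -/
noncomputable def alphaH (q : ℕ) (F : Type*) [Field F] [Fintype F] [DecidableEq F]
    (δ : ℝ) : ℝ :=
  sSup {R : ℝ | R ∈ Set.Icc (0 : ℝ) 1 ∧ (δ, R) ∈ UH q F}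

section AuxLemmas

variable {F : Type*} [Field F]

open Module Submodule Finset in
/-- Determinant of a rank-one perturbation is an affine function of the scaling. -/
private lemma det_affine_s16 {k : ℕ} (M : Matrix (Fin k) (Fin k) F) (v w : Fin k → F) :
    ∃ a b : F, ∀ t : F, (M + t • Matrix.vecMulVec v w).det = a + b * t := by
  classical
  set Cm : Matrix (Fin k) Unit F := Matrix.of fun j _ => v j with hCm
  set r0 : Unit ⊕ Fin k → F := Sum.elim (fun _ => (1 : F)) (fun _ => 0) with hr0
  set r1 : Unit ⊕ Fin k → F := Sum.elim (fun _ => (0 : F)) (fun l => -w l) with hr1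
  set N0 : Matrix (Unit ⊕ Fin k) (Unit ⊕ Fin k) F := Matrix.fromBlocks 1 0 Cm M with hN0
  haveI : Invertible (1 : Matrix Unit Unit F) := invertibleOne
  refine ⟨(N0.updateRow (Sum.inl ()) r0).det, (N0.updateRow (Sum.inl ()) r1).det, fun t => ?_⟩
  have hdet : (Matrix.fromBlocks 1 (Matrix.of fun (_ : Unit) l => -(t * w l)) Cm M).det
      = (M + t • Matrix.vecMulVec v w).det := by
    rw [Matrix.det_fromBlocks₁₁]
    simp only [Matrix.det_one, one_mul]
    congr 1
    ext j l
    simp [Matrix.mul_apply, Matrix.vecMulVec_apply, hCm, Matrix.sub_apply, Matrix.add_apply]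
    ring
  rw [← hdet]
  have hrow : (Matrix.fromBlocks 1 (Matrix.of fun (_ : Unit) l => -(t * w l)) Cm M)
      = N0.updateRow (Sum.inl ()) (r0 + t • r1) := by
    ext i j
    rcases i with i | i
    · rcases j with j | j
      · simp [hN0, hr0, hr1, Matrix.updateRow_apply, Matrix.one_apply]
      · simp [hN0, hr0, hr1, Matrix.updateRow_apply]
        try ring
    · rcases j with j | j <;> simp [hN0, Matrix.updateRow_apply]
  rw [hrow, Matrix.det_updateRow_add, Matrix.det_updateRow_smul, mul_comm]

/-- A function affine in each coordinate which vanishes on a grid with at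
least two values per coordinate vanishes everywhere. -/
private lemma multiaffine_eq_zero {n : ℕ} (f : (Fin n → F) → F) (T : Set F)
    (hT : ∃ x ∈ T, ∃ y ∈ T, x ≠ y)
    (haff : ∀ (i : Fin n) (t : Fin n → F), ∃ a b : F, ∀ x : F,
      f (Function.update t i x) = a + b * x)
    (h0 : ∀ t : Fin n → F, (∀ i, t i ∈ T) → f t = 0) (t : Fin n → F) : f t = 0 := by
  obtain ⟨x, hx, y, hy, hxy⟩ := hT
  have main : ∀ m : ℕ, ∀ t : Fin n → F, (∀ i : Fin n, m ≤ i.1 → t i ∈ T) → f t = 0 := by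
    intro m
    induction m with
    | zero => exact fun t ht => h0 t fun i => ht i (Nat.zero_le _)
    | succ m ih =>
      intro t ht
      by_cases hm : m < n
      · set i : Fin n := ⟨m, hm⟩ with hi
        obtain ⟨a, b, hab⟩ := haff i t
        have hupd : ∀ z : F, z ∈ T → f (Function.update t i z) = 0 := by
          intro z hz
          refine ih _ fun j hj => ?_
          rcases eq_or_ne j i with rfl | hne
          · simpa using hz
          · rw [Function.update_of_ne hne]
            refine ht j ?_
            have : j.1 ≠ m := fun h => hne (Fin.ext (by simp [h, hi]))
            omega
        have hx0 := hupd x hx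
        have hy0 := hupd y hy
        rw [hab] at hx0 hy0
        have hb : b = 0 := by
          have hsub : b * (x - y) = 0 := by linear_combination hx0 - hy0
          rcases mul_eq_zero.1 hsub with h | h
          · exact h
          · exact absurd (sub_eq_zero.1 h) hxy
        have ha : a = 0 := by linear_combination hx0 - x * hb
        have := hab (t i)
        rw [Function.update_eq_self] at this
        rw [this, ha, hb]
        ring
      · exact ih t fun j hj => absurd j.2 (by omega)
  exact main n t fun i hi => absurd i.2 (by omega)

open Module in
/-- A linearly independent family of `k` vectors in `Fⁿ` admits `k` coordinates
on which the corresponding `k × k` matrix is invertible. -/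
private lemma exists_good_cols {k n : ℕ} (g : Fin k → (Fin n → F)) (hg : LinearIndependent F g) :
    ∃ e : Fin k → Fin n, Function.Injective e ∧
      IsUnit (Matrix.of fun j l => g j (e l)).det := by
  classical
  have hspan : Submodule.span F (Set.range fun i : Fin n => fun j : Fin k => g j i) = ⊤ := by
    have h3 : (Matrix.of g)ᵀ.rank = finrank F (Submodule.span F (Set.range (Matrix.of g))) := by
      have := Matrix.rank_eq_finrank_span_cols ((Matrix.of g)ᵀ)
      exact this
    have h4 : finrank F (Submodule.span F (Set.range (Matrix.of g))) = k := by
      have := finrank_span_eq_card hg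
      rw [Fintype.card_fin] at this
      exact this
    have h5 : (Matrix.of g).rank = finrank F
        (Submodule.span F (Set.range (Matrix.of g)ᵀ)) := Matrix.rank_eq_finrank_span_cols _
    have h6 : finrank F (Submodule.span F (Set.range (Matrix.of g)ᵀ)) = k := by
      rw [← h5, ← Matrix.rank_transpose, h3, h4]
    have h7 : (Set.range (Matrix.of g)ᵀ) = (Set.range fun i : Fin n => fun j : Fin k => g j i) :=
      rfl
    rw [h7] at h6
    apply Submodule.eq_top_of_finrank_eq
    rw [h6, Module.finrank_pi, Fintype.card_fin]
  obtain ⟨b, hbsub, hbspan, hbind⟩ :=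
    exists_linearIndependent F (Set.range fun i : Fin n => fun j : Fin k => g j i)
  rw [hspan] at hbspan
  haveI : Fintype b := hbind.setFinite.fintype
  let bas : Basis b F (Fin k → F) := Basis.mk hbind (by rw [Subtype.range_coe]; exact hbspan.ge)
  have hcard : Fintype.card b = k := by
    have h8 := Module.finrank_eq_card_basis bas
    rw [Module.finrank_pi, Fintype.card_fin] at h8
    omega
  let e0 : Fin k ≃ b := (Fintype.equivFinOfCardEq hcard).symm
  have hpickspec : ∀ x : b, ∃ i : Fin n, (fun j => g j i) = (x : Fin k → F) := fun x => hbsub x.2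
  choose pick hpick using hpickspec
  refine ⟨fun l => pick (e0 l), ?_, ?_⟩
  · intro l1 l2 h
    have h' : pick (e0 l1) = pick (e0 l2) := h
    have : (e0 l1 : Fin k → F) = (e0 l2 : Fin k → F) := by
      rw [← hpick (e0 l1), ← hpick (e0 l2), h']
    exact e0.injective (Subtype.ext this)
  · rw [← Matrix.isUnit_iff_isUnit_det]
    rw [← Matrix.linearIndependent_cols_iff_isUnit]
    have hcols : (fun l => (Matrix.of fun j l' => g j (pick (e0 l')))ᵀ l)
        = fun l => ((e0 l : Fin k → F)) := by
      funext l
      exact hpick (e0 l)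
    show LinearIndependent F (fun l => (Matrix.of fun j l' => g j (pick (e0 l')))ᵀ l)
    rw [hcols]
    exact hbind.comp e0 e0.injective

end AuxLemmas

open Module in
/-- Any linear code over `F_{q²}` is monomially equivalent to a Hermitian LCD
code with the same dimension and minimum distance (for `q > 2`). -/
private lemma exists_hermitian_lcd {F : Type*} [Field F] [DecidableEq F]
    (q : ℕ) (σ : F →+* F) (hσ : ∀ x : F, σ x = x ^ q)
    (T : Set F) (hT0 : ∀ x ∈ T, ∃ a : F, a ≠ 0 ∧ a ^ (q + 1) = x)
    (hT : ∃ x ∈ T, ∃ y ∈ T, x ≠ y)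
    {n : ℕ} [FiniteDimensional F (Fin n → F)] (C : Submodule F (Fin n → F)) :
    ∃ C' : Submodule F (Fin n → F),
      Module.finrank F C' = Module.finrank F C ∧ minDist C' = minDist C ∧
      C' ⊓ hdualCode q C' = ⊥ := by
  classical
  set k := Module.finrank F C with hk
  let g₀ : Basis (Fin k) F C := Module.finBasisOfFinrankEq F C rfl
  set g : Fin k → (Fin n → F) := fun j => (g₀ j : Fin n → F) with hgdef
  have hg : LinearIndependent F g := g₀.linearIndependent.map' C.subtype C.ker_subtype
  set Gram : (Fin n → F) → Matrix (Fin k) (Fin k) F :=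
    fun t => Matrix.of fun j l => ∑ i, t i * (g j i * σ (g l i)) with hGramdef
  -- affineness in each coordinate
  have haff : ∀ (i : Fin n) (t : Fin n → F), ∃ a b : F, ∀ x : F,
      (Gram (Function.update t i x)).det = a + b * x := by
    intro i t
    have hGram : ∀ x : F, Gram (Function.update t i x)
        = Gram (Function.update t i 0)
          + x • Matrix.vecMulVec (fun j => g j i) (fun l => σ (g l i)) := by
      intro x
      ext j l
      simp only [hGramdef, Matrix.of_apply, Matrix.add_apply, Matrix.smul_apply,
        Matrix.vecMulVec_apply, smul_eq_mul]
      have hsplit : ∀ i' : Fin n, Function.update t i x i' * (g j i' * σ (g l i'))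
          = Function.update t i 0 i' * (g j i' * σ (g l i'))
            + (if i' = i then x * (g j i * σ (g l i)) else 0) := by
        intro i'
        rcases eq_or_ne i' i with rfl | hne
        · simp
        · rw [Function.update_of_ne hne, Function.update_of_ne hne, if_neg hne, add_zero]
      rw [Finset.sum_congr rfl fun i' _ => hsplit i', Finset.sum_add_distrib,
        Finset.sum_ite_eq' Finset.univ i]
      simp [mul_comm]
    obtain ⟨a, b, hab⟩ := det_affine_s16 (Gram (Function.update t i 0))
      (fun j => g j i) (fun l => σ (g l i))
    exact ⟨a, b, fun x => by rw [hGram x]; exact hab x⟩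
  -- nonvanishing at an indicator point
  obtain ⟨e, he_inj, he_det⟩ := exists_good_cols g hg
  have hdet0 : (Gram (fun i => if i ∈ Finset.image e Finset.univ then 1 else 0)).det ≠ 0 := by
    have hGt0 : Gram (fun i => if i ∈ Finset.image e Finset.univ then 1 else 0)
        = (Matrix.of fun j l => g j (e l)) * ((Matrix.of fun j l => g j (e l)).map σ)ᵀ := by
      ext j l'
      simp only [hGramdef, Matrix.of_apply, Matrix.mul_apply, Matrix.transpose_apply,
        Matrix.map_apply]
      have : ∀ i : Fin n, (if i ∈ Finset.image e Finset.univ then (1:F) else 0)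
            * (g j i * σ (g l' i))
          = if i ∈ Finset.image e Finset.univ then g j i * σ (g l' i) else 0 := by
        intro i; split_ifs <;> simp
      rw [Finset.sum_congr rfl fun i _ => this i, Finset.sum_ite_mem,
        Finset.univ_inter, Finset.sum_image (fun a _ b _ h => he_inj h)]
    rw [hGt0, Matrix.det_mul, Matrix.det_transpose]
    have hmapdet : ((Matrix.of fun j l => g j (e l)).map σ).det
        = σ (Matrix.of fun j l => g j (e l)).det := by
      rw [← RingHom.mapMatrix_apply, ← RingHom.map_det]
    rw [hmapdet]
    have h1 : (Matrix.of fun j l => g j (e l)).det ≠ 0 := he_det.ne_zero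
    exact mul_ne_zero h1 ((map_ne_zero σ).2 h1)
  -- find a grid point where the Gram determinant is nonzero
  have hgrid : ∃ t : Fin n → F, (∀ i, t i ∈ T) ∧ (Gram t).det ≠ 0 := by
    by_contra h
    push_neg at h
    exact hdet0 (multiaffine_eq_zero (fun t => (Gram t).det) T hT haff h _)
  obtain ⟨t, htT, htdet⟩ := hgrid
  choose a ha1 ha2 using fun i => hT0 (t i) (htT i)
  -- the scaling equivalence
  set φ : (Fin n → F) ≃ₗ[F] (Fin n → F) :=
    LinearEquiv.piCongrRight (fun i => LinearEquiv.smulOfNeZero F F (a i) (ha1 i)) with hφdef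
  have hφ : ∀ (x : Fin n → F) (i : Fin n), φ x i = a i * x i := fun x i => rfl
  refine ⟨C.map (φ : (Fin n → F) →ₗ[F] (Fin n → F)), φ.finrank_map_eq C, ?_, ?_⟩
  · -- minimum distance is preserved
    have hham : ∀ c : Fin n → F, hammingNorm (φ c) = hammingNorm c := by
      intro c
      unfold hammingNorm
      apply congrArg Finset.card
      ext i
      simp [hφ, mul_eq_zero, ha1 i]
    unfold minDist
    congr 1
    ext w
    constructor
    · rintro ⟨c, hc, hc0, rfl⟩
      obtain ⟨c₀, hc₀, rfl⟩ := Submodule.mem_map.1 hc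
      exact ⟨c₀, hc₀, fun h => hc0 (by simp [h]), (hham c₀).symm ▸ rfl⟩
    · rintro ⟨c, hc, hc0, rfl⟩
      refine ⟨φ c, Submodule.mem_map_of_mem hc, ?_, hham c⟩
      intro h
      exact hc0 (by simpa using φ.map_eq_zero_iff.1 h)
  · -- Hermitian LCD
    rw [eq_bot_iff]
    rintro x ⟨hx1, hx2⟩
    obtain ⟨c, hc, rfl⟩ := Submodule.mem_map.1 hx1
    have hdual : ∀ c' ∈ C.map (φ : (Fin n → F) →ₗ[F] (Fin n → F)),
        (φ c) ⬝ᵥ (fun i => (c' i) ^ q) = 0 := hx2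
    set u : Fin k → F := fun j => g₀.repr ⟨c, hc⟩ j with hu
    have hcsum : ∀ i, c i = ∑ j, u j * g j i := by
      intro i
      have h1 := g₀.sum_repr ⟨c, hc⟩
      have h2 := congrArg (fun z : C => (z : Fin n → F) i) h1
      simp only [AddSubmonoidClass.coe_finset_sum, SetLike.val_smul, Finset.sum_apply,
        Pi.smul_apply, smul_eq_mul] at h2
      exact h2.symm
    have hvec : ∀ l, Matrix.vecMul u (Gram t) l = 0 := by
      intro l
      have hmem : φ (g l) ∈ C.map (φ : (Fin n → F) →ₗ[F] (Fin n → F)) :=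
        Submodule.mem_map_of_mem (g₀ l).2
      have h0 := hdual _ hmem
      have hterm : ∀ i : Fin n, (φ c) i * ((φ (g l)) i) ^ q
          = ∑ j, u j * (t i * (g j i * σ (g l i))) := by
        intro i
        rw [hφ, hφ, hcsum i, Finset.mul_sum, Finset.sum_mul]
        apply Finset.sum_congr rfl
        intro j _
        rw [hσ, ← ha2 i, mul_pow]
        ring
      have h3 : (φ c) ⬝ᵥ (fun i => ((φ (g l)) i) ^ q)
          = ∑ j, u j * Gram t j l := by
        rw [dotProduct]
        rw [Finset.sum_congr rfl fun i _ => hterm i, Finset.sum_comm]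
        apply Finset.sum_congr rfl
        intro j _
        simp only [hGramdef, Matrix.of_apply]
        rw [Finset.mul_sum]
      have h4 : Matrix.vecMul u (Gram t) l = ∑ j, u j * Gram t j l := by
        simp [Matrix.vecMul, dotProduct]
      rw [h4, ← h3]
      exact h0
    have hunit : IsUnit (Gram t) :=
      (Matrix.isUnit_iff_isUnit_det _).2 (isUnit_iff_ne_zero.2 htdet)
    have hu0 : u = 0 := by
      have hGv : Matrix.vecMul u (Gram t) = 0 := funext hvec
      have := congrArg (fun v => Matrix.vecMul v (Gram t)⁻¹) hGv
      simpa [Matrix.vecMul_vecMul, Matrix.mul_nonsing_inv _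
        (isUnit_iff_ne_zero.2 htdet), Matrix.zero_vecMul] using this
    have hc0 : c = 0 := by
      have h1 : (⟨c, hc⟩ : C) = 0 := by
        have := (g₀.sum_repr ⟨c, hc⟩).symm
        rw [this]
        apply Finset.sum_eq_zero
        intro j _
        have : u j = 0 := congrFun hu0 j
        simp only [hu] at this
        simp [this]
      simpa using congrArg Subtype.val h1
    simp [hc0]

/-- For a prime power `q > 2`, Hermitian LCD codes over `F_{q²}` achieve the
same asymptotic rate/distance trade-off as arbitrary linear codes over
`F_{q²}`: `α_{q²}^H(δ) = α_{q²}^lin(δ)` for every `δ ∈ [0,1]`. -/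
theorem alphaH_eq_alphaLin
    (q : ℕ) (hq : ∃ p m : ℕ, p.Prime ∧ 0 < m ∧ q = p ^ m) (hq2 : 2 < q)
    (F : Type*) [Field F] [Fintype F] [DecidableEq F] (hcard : Fintype.card F = q ^ 2)
    (δ : ℝ) (hδ : δ ∈ Set.Icc (0 : ℝ) 1) :
    alphaH q F δ = alphaLin F δ := by
  classical
  obtain ⟨p, m, hp, hm, hqpm⟩ := hq
  haveI : Fact p.Prime := ⟨hp⟩
  -- `F` has characteristic `p`
  haveI hcharF : CharP F p := by
    haveI hFchar : CharP F (ringChar F) := ringChar.charP F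
    obtain ⟨np, hrp, hFcard⟩ := FiniteField.card F (ringChar F)
    have hdvd : p ∣ ringChar F ^ (np : ℕ) := by
      rw [← hFcard, hcard, hqpm, ← pow_mul]
      exact dvd_pow_self p (by positivity)
    have : p = ringChar F :=
      (Nat.prime_dvd_prime_iff_eq hp hrp).1 (hp.dvd_of_dvd_pow hdvd)
    rwa [this]
  -- the conjugation `x ↦ x ^ q` is a ring homomorphism
  let σ : F →+* F :=
    { toFun := fun x => x ^ q
      map_one' := one_pow q
      map_mul' := fun x y => mul_pow x y q
      map_zero' := zero_pow (by omega)
      map_add' := by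
        intro x y
        simp only [hqpm]
        exact add_pow_char_pow x y p m }
  have hσ : ∀ x : F, σ x = x ^ q := fun x => rfl
  -- the set of (q+1)-st powers of nonzero elements has at least two elements
  set T : Set F := (fun x : F => x ^ (q + 1)) '' {x : F | x ≠ 0} with hTdef
  have hT0 : ∀ x ∈ T, ∃ a : F, a ≠ 0 ∧ a ^ (q + 1) = x := by
    rintro x ⟨a, ha, rfl⟩
    exact ⟨a, ha, rfl⟩
  have hT : ∃ x ∈ T, ∃ y ∈ T, x ≠ y := by
    obtain ⟨gu, hgu⟩ := IsCyclic.exists_generator (α := Fˣ)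
    have horder : orderOf gu = q ^ 2 - 1 := by
      have h1 := orderOf_eq_card_of_forall_mem_zpowers hgu
      rw [h1, Nat.card_eq_fintype_card, Fintype.card_units, hcard]
    have hne : ((gu : F)) ^ (q + 1) ≠ 1 := by
      intro h
      have h2 : (gu ^ (q + 1) : Fˣ) = 1 := Units.ext (by push_cast; exact h)
      have hdvd := orderOf_dvd_of_pow_eq_one h2
      rw [horder] at hdvd
      have h3 := Nat.le_of_dvd (by omega) hdvd
      have h4 : q * q ≤ q + 2 := by
        have : q ^ 2 = q * q := sq q
        omega
      nlinarith
    refine ⟨1, ⟨1, one_ne_zero, one_pow _⟩, (gu : F) ^ (q + 1),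
      ⟨(gu : F), gu.ne_zero, rfl⟩, fun h => hne h.symm⟩
  -- the sets of achievable pairs coincide
  have hUU : UH q F = ULin F := by
    ext pr
    constructor
    · rintro ⟨hIcc, nn, kk, dd, C, h1, h2, _, h4, h5, h6⟩
      exact ⟨hIcc, nn, kk, dd, C, h1, h2, h4, h5, h6⟩
    · rintro ⟨hIcc, nn, kk, dd, C, h1, h2, h4, h5, h6⟩
      choose C' hC'1 hC'2 hC'3 using
        fun i => exists_hermitian_lcd q σ hσ T hT0 hT (C i)
      exact ⟨hIcc, nn, kk, dd, C', fun i => (hC'1 i).trans (h1 i),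
        fun i => (hC'2 i).trans (h2 i), hC'3, h4, h5, h6⟩
  unfold alphaH alphaLin
  rw [hUU]
end
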